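/- arXiv:2106.11701 — 8 statements merged into one kernel-verified Lean document; each statement's English description precedes it below -/
import Mathlib

section
/- Let f: ℝ → ℝ≥0 be measurable and tile with both ℤ at level 1 and with αℤ at level 1/α, where α ∈ (0,1): ∑_{n∈ℤ} f(x−n) = 1 and ∑_{n∈ℤ} f(x−nα) = 1/α for a.e. x. Then the Lebesgue measure of the support of f is at least ⌈1/α⌉·α, and in particular at least 2α. -/
open MeasureTheory

/-- If a nonnegative measurable `f : ℝ → ℝ` tiles with `ℤ` at level `1` and with
`αℤ` at level `1/α` for `α ∈ (0,1)`, then `|supp f| ≥ ⌈1/α⌉·α ≥ 2α`. -/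
theorem support_lower_bound_two_lattices
    (f : ℝ → ℝ) (α : ℝ) (hα : α ∈ Set.Ioo (0 : ℝ) 1)
    (hmeas : Measurable f) (hnonneg : ∀ x, 0 ≤ f x)
    (htile1 : ∀ᵐ x : ℝ, ∑' n : ℤ, f (x - n) = 1)
    (htile2 : ∀ᵐ x : ℝ, ∑' n : ℤ, f (x - n * α) = 1 / α) :
    ENNReal.ofReal ((⌈1 / α⌉ : ℝ) * α) ≤ volume (Function.support f) ∧
    ENNReal.ofReal (2 * α) ≤ volume (Function.support f) := by
  classical
  obtain ⟨hα0, hα1⟩ := hα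
  set S := Function.support f with hSdef
  have hSm : MeasurableSet S := by
    have : S = f ⁻¹' ({0}ᶜ) := by
      ext x; simp [hSdef, Function.mem_support]
    rw [this]
    exact hmeas (measurableSet_singleton 0).compl
  set g : ℝ → ENNReal := S.indicator 1 with hgdef
  have hgm : Measurable g := measurable_one.indicator hSm
  -- the ceiling as a natural number
  have h1α : (1 : ℝ) < 1 / α := (one_lt_one_div hα0 hα1)
  set m : ℕ := (⌈1 / α⌉ : ℤ).toNat with hmdef
  have hceil_pos : (0 : ℤ) < ⌈1 / α⌉ := Int.ceil_pos.mpr (by linarith)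
  have hmcast : (m : ℝ) = (⌈1 / α⌉ : ℝ) := by
    have := Int.toNat_of_nonneg hceil_pos.le
    exact_mod_cast congrArg (fun z : ℤ => (z : ℝ)) this
  have hm2 : 2 ≤ m := by
    have : (1 : ℤ) < ⌈1 / α⌉ := by
      rwa [Int.lt_ceil, Int.cast_one]
    omega
  -- Step A : f ≤ 1 a.e.
  have hA : ∀ᵐ x : ℝ, f x ≤ 1 := by
    filter_upwards [htile1] with x hx
    by_cases hs : Summable fun n : ℤ => f (x - n)
    · have h0 := Summable.le_tsum hs 0 fun i _ => hnonneg _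
      rw [hx] at h0
      simpa using h0
    · rw [tsum_eq_zero_of_not_summable hs] at hx
      norm_num at hx
  -- Step B : simultaneous bound along the α-lattice
  have hB : ∀ᵐ x : ℝ, ∀ n : ℤ, f (x - n * α) ≤ 1 := by
    rw [ae_all_iff]
    intro n
    have mp : MeasurePreserving (fun x : ℝ => x - (n : ℝ) * α) volume volume := by
      simpa [sub_eq_add_neg] using measurePreserving_add_right (volume : Measure ℝ) (-((n : ℝ) * α))
    have hset : MeasurableSet {x : ℝ | ¬ f x ≤ 1} := by
      have : {x : ℝ | ¬ f x ≤ 1} = {x | 1 < f x} := by ext x; simp [not_le]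
      rw [this]
      exact measurableSet_lt measurable_const hmeas
    rw [ae_iff] at hA ⊢
    calc volume {x : ℝ | ¬ f (x - n * α) ≤ 1}
        = volume ((fun x : ℝ => x - (n : ℝ) * α) ⁻¹' {x | ¬ f x ≤ 1}) := rfl
      _ = volume {x : ℝ | ¬ f x ≤ 1} := mp.measure_preimage hset.nullMeasurableSet
      _ = 0 := hA
  -- Step C : at a.e. point, at least m of the α-translates are in the support
  have hC : ∀ᵐ x : ℝ, (m : ENNReal) ≤ ∑' n : ℤ, g (x - n * α) := by
    filter_upwards [htile2, hB] with x hx hb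
    have hsum : Summable fun n : ℤ => f (x - n * α) := by
      by_contra hs
      rw [tsum_eq_zero_of_not_summable hs] at hx
      have : (0 : ℝ) < 1 / α := by positivity
      linarith [hx ▸ this]
    have hlt : (m : ℝ) - 1 < 1 / α := by
      rw [hmcast]
      have := Int.ceil_lt_add_one (1 / α : ℝ)
      linarith
    obtain ⟨F, hF⟩ : ∃ F : Finset ℤ, (m : ℝ) - 1 < ∑ n ∈ F, f (x - n * α) := by
      have h1 := hsum.hasSum
      have h2 : ∀ᶠ F : Finset ℤ in Filter.atTop, (m : ℝ) - 1 < ∑ n ∈ F, f (x - n * α) :=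
        h1.eventually (eventually_gt_nhds (by rw [hx]; exact hlt))
      exact h2.exists
    set F' : Finset ℤ := F.filter (fun n => f (x - n * α) ≠ 0) with hF'def
    have hsum_eq : ∑ n ∈ F, f (x - n * α) = ∑ n ∈ F', f (x - n * α) := by
      rw [hF'def]
      exact (Finset.sum_filter_of_ne (fun n _ hne => hne)).symm
    have hsum_le : ∑ n ∈ F', f (x - n * α) ≤ (F'.card : ℝ) := by
      calc ∑ n ∈ F', f (x - n * α) ≤ ∑ _n ∈ F', (1 : ℝ) :=
            Finset.sum_le_sum fun n _ => hb n
        _ = (F'.card : ℝ) := by simp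
    have hcard : m ≤ F'.card := by
      have : (m : ℝ) - 1 < (F'.card : ℝ) := by
        rw [hsum_eq] at hF; linarith
      have : (m : ℝ) < (F'.card : ℝ) + 1 := by linarith
      exact_mod_cast Nat.lt_add_one_iff.mp (by exact_mod_cast this)
    calc (m : ENNReal) ≤ (F'.card : ENNReal) := by exact_mod_cast hcard
      _ = ∑ n ∈ F', g (x - n * α) := by
          rw [hgdef]
          rw [Finset.sum_congr rfl (fun n hn => ?_), Finset.sum_const, nsmul_eq_mul, mul_one]
          have hmem : x - (n : ℝ) * α ∈ S := (Finset.mem_filter.mp hn).2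
          simp [Set.indicator_of_mem hmem]
      _ ≤ ∑' n : ℤ, g (x - n * α) := ENNReal.sum_le_tsum F'
  -- reindex the sum
  have hC' : ∀ᵐ x : ℝ, (m : ENNReal) ≤ ∑' n : ℤ, g (x + n * α) := by
    filter_upwards [hC] with x hx
    have hre : ∑' n : ℤ, g (x - n * α) = ∑' n : ℤ, g (x + n * α) := by
      rw [← (Equiv.neg ℤ).tsum_eq (fun n : ℤ => g (x + n * α))]
      apply tsum_congr
      intro n
      simp only [Equiv.neg_apply]
      congr 1
      push_cast
      ring
    rw [← hre]
    exact hx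
  -- Step D : identify the support measure as a periodized integral over [0, α)
  have key : ∀ n : ℤ, ∫⁻ x in Set.Ico (0 : ℝ) α, g (x + n * α)
      = ∫⁻ x in Set.Ico ((n : ℝ) * α) ((n : ℝ) * α + α), g x := by
    intro n
    have mp := measurePreserving_add_right (volume : Measure ℝ) ((n : ℝ) * α)
    have emb := (Homeomorph.addRight ((n : ℝ) * α)).measurableEmbedding
    have h := mp.setLIntegral_comp_preimage_emb emb g
      (Set.Ico ((n : ℝ) * α) ((n : ℝ) * α + α))
    rw [Set.preimage_add_const_Ico] at h
    simpa using h
  have hD : volume S = ∫⁻ x in Set.Ico (0 : ℝ) α, ∑' n : ℤ, g (x + n * α) := by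
    rw [lintegral_tsum (f := fun (n : ℤ) (x : ℝ) => g (x + (n : ℝ) * α)) (fun n => (hgm.comp (measurable_add_const ((n : ℝ) * α))).aemeasurable)]
    simp_rw [key]
    rw [← lintegral_iUnion (fun n : ℤ => measurableSet_Ico)
      (by
        intro i j hij
        simp only [Function.onFun, Set.Ico_disjoint_Ico]
        rcases hij.lt_or_gt with h | h
        · have h1 : ((i : ℝ) + 1) ≤ (j : ℝ) := by exact_mod_cast h
          calc min ((i : ℝ) * α + α) ((j : ℝ) * α + α) ≤ (i : ℝ) * α + α := min_le_left _ _
            _ ≤ (j : ℝ) * α := by nlinarith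
            _ ≤ max ((i : ℝ) * α) ((j : ℝ) * α) := le_max_right _ _
        · have h1 : ((j : ℝ) + 1) ≤ (i : ℝ) := by exact_mod_cast h
          calc min ((i : ℝ) * α + α) ((j : ℝ) * α + α) ≤ (j : ℝ) * α + α := min_le_right _ _
            _ ≤ (i : ℝ) * α := by nlinarith
            _ ≤ max ((i : ℝ) * α) ((j : ℝ) * α) := le_max_left _ _) g]
    have hu : (⋃ n : ℤ, Set.Ico ((n : ℝ) * α) ((n : ℝ) * α + α)) = Set.univ := by
      have := iUnion_Ico_zsmul hα0
      simpa [zsmul_eq_mul, add_mul, one_mul] using this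
    rw [hu, Measure.restrict_univ, hgdef, lintegral_indicator hSm]
    simp
  -- main estimate
  have hmain : (m : ENNReal) * ENNReal.ofReal α ≤ volume S := by
    rw [hD]
    calc (m : ENNReal) * ENNReal.ofReal α
        = ∫⁻ _ in Set.Ico (0 : ℝ) α, (m : ENNReal) := by
          rw [setLIntegral_const, Real.volume_Ico, sub_zero]
      _ ≤ ∫⁻ x in Set.Ico (0 : ℝ) α, ∑' n : ℤ, g (x + n * α) :=
          lintegral_mono_ae (ae_restrict_of_ae hC')
  have hofReal : ENNReal.ofReal ((⌈1 / α⌉ : ℝ) * α) = (m : ENNReal) * ENNReal.ofReal α := by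
    rw [← hmcast, ENNReal.ofReal_mul (by positivity), ENNReal.ofReal_natCast]
  constructor
  · rw [hofReal]; exact hmain
  · refine le_trans ?_ hmain
    rw [← ENNReal.ofReal_natCast m, ← ENNReal.ofReal_mul (by positivity)]
    apply ENNReal.ofReal_le_ofReal
    have : (2 : ℝ) ≤ (m : ℝ) := by exact_mod_cast hm2
    nlinarith
end

section
/- Let Λ₁ = ℤᵈ and Λ₂ = αℤᵈ with α > 0 irrational, d ≥ 1. Then there is no bounded set F ⊆ ℝᵈ containing exactly one representative from each coset of Λ₁ and exactly one representative from each coset of Λ₂. -/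
lemma aux_count_cfd (d : ℕ) (hd : 1 ≤ d) (β γ : ℝ) (hβ : 0 < β) (hγ : 0 < γ)
    (F : Set (Fin d → ℝ)) (r : ℝ) (hr : ∀ y ∈ F, ∀ i, |y i| ≤ r)
    (hex : ∀ x : Fin d → ℝ, ∃ y, y ∈ F ∧ ∀ i, ∃ n : ℤ, y i - x i = n * β)
    (huniq : ∀ x : Fin d → ℝ, ∀ y z : Fin d → ℝ,
        (y ∈ F ∧ ∀ i, ∃ n : ℤ, y i - x i = n * γ) →
        (z ∈ F ∧ ∀ i, ∃ n : ℤ, z i - x i = n * γ) → y = z)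
    (N : ℕ) : β * N ≤ r + γ * N + β := by
  classical
  have key : ∀ n : Fin d → ℤ, ∃ y : Fin d → ℝ, ∃ k : Fin d → ℤ,
      y ∈ F ∧ ∀ i, y i - γ * n i = k i * β := by
    intro n
    obtain ⟨y, hyF, hy⟩ := hex (fun i => γ * n i)
    exact ⟨y, fun i => (hy i).choose, hyF, fun i => (hy i).choose_spec⟩
  choose y k hyF hyk using key
  have i0 : Fin d := ⟨0, hd⟩
  have hr0 : 0 ≤ r := le_trans (abs_nonneg _) (hr _ (hyF 0) i0)
  set Kb : ℤ := ⌈(r + γ * N) / β⌉ with hKbdef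
  have hKb0 : 0 ≤ Kb := Int.ceil_nonneg (div_nonneg (by positivity) hβ.le)
  set S : Finset (Fin d → ℤ) := Finset.Icc (fun _ => -(N : ℤ)) (fun _ => (N : ℤ)) with hS
  set T : Finset (Fin d → ℤ) := Finset.Icc (fun _ => -Kb) (fun _ => Kb) with hT
  -- maps to
  have hmaps : ∀ n ∈ S, k n ∈ T := by
    intro n hn
    rw [hS, Finset.mem_Icc] at hn
    rw [hT, Finset.mem_Icc]
    have hbound : ∀ i, |k n i| ≤ Kb := by
      intro i
      have ha : -(N : ℤ) ≤ n i := hn.1 i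
      have hb : n i ≤ (N : ℤ) := hn.2 i
      have h1 : |(k n i : ℝ) * β| = |y n i - γ * n i| := by rw [hyk n i]
      have hni : |(n i : ℝ)| ≤ (N : ℝ) := by
        rw [abs_le]
        exact ⟨by exact_mod_cast ha, by exact_mod_cast hb⟩
      have hy' : |y n i| ≤ r := hr _ (hyF n) i
      have h2 : |y n i - γ * n i| ≤ r + γ * N :=
        calc |y n i - γ * n i| ≤ |y n i| + |γ * n i| := abs_sub _ _
          _ ≤ r + γ * N := by
              rw [abs_mul, abs_of_pos hγ]
              exact add_le_add hy' (by nlinarith [abs_nonneg (n i : ℝ)])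
      have h3 : ((|k n i| : ℤ) : ℝ) * β ≤ r + γ * N := by
        have h1' : |(k n i : ℝ) * β| ≤ r + γ * N := h1.trans_le h2
        rw [abs_mul, abs_of_pos hβ] at h1'
        rw [Int.cast_abs]
        exact h1'
      have h4 : ((|k n i| : ℤ) : ℝ) ≤ (r + γ * N) / β := (le_div_iff₀ hβ).mpr h3
      have h5 : ((|k n i| : ℤ) : ℝ) ≤ (Kb : ℝ) := h4.trans (Int.le_ceil _)
      exact_mod_cast h5
    exact ⟨fun i => neg_le_of_abs_le (hbound i), fun i => le_of_abs_le (hbound i)⟩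
  -- injectivity
  have hinj : Set.InjOn k S := by
    intro n _ n' _ hkk
    have hy_eq : y n = y n' := by
      apply huniq (fun i => β * k n i) (y n) (y n')
      · exact ⟨hyF n, fun i => ⟨n i, by have := hyk n i; linarith [hyk n i]⟩⟩
      · refine ⟨hyF n', fun i => ⟨n' i, ?_⟩⟩
        have := hyk n' i
        rw [← hkk] at this
        linarith
    funext i
    have e1 := hyk n i
    have e2 := hyk n' i
    rw [hy_eq, hkk] at e1
    have : γ * (n i : ℝ) = γ * (n' i : ℝ) := by linarith
    have : (n i : ℝ) = n' i := mul_left_cancel₀ hγ.ne' this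
    exact_mod_cast this
  have hcard : S.card ≤ T.card := Finset.card_le_card_of_injOn k hmaps hinj
  have hScard : S.card = (2 * N + 1) ^ d := by
    rw [hS, Pi.card_Icc, Finset.prod_const, Int.card_Icc, Finset.card_univ, Fintype.card_fin]
    congr 1
    omega
  have hTcard : T.card = ((2 * Kb + 1).toNat) ^ d := by
    rw [hT, Pi.card_Icc, Finset.prod_const, Int.card_Icc, Finset.card_univ, Fintype.card_fin]
    congr 1
    omega
  rw [hScard, hTcard] at hcard
  have hle : 2 * N + 1 ≤ (2 * Kb + 1).toNat :=
    (Nat.pow_le_pow_iff_left (by omega)).mp hcard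
  have hNKb : (N : ℤ) ≤ Kb := by omega
  have hNKbR : (N : ℝ) ≤ (Kb : ℝ) := by exact_mod_cast hNKb
  have hceil : (Kb : ℝ) ≤ (r + γ * N) / β + 1 := le_of_lt (Int.ceil_lt_add_one _)
  have : (N : ℝ) ≤ (r + γ * N) / β + 1 := hNKbR.trans hceil
  have h6 := (le_div_iff₀ hβ).mp (by linarith : (N : ℝ) - 1 ≤ (r + γ * N) / β)
  nlinarith

/-- For `Λ₁ = ℤᵈ` and `Λ₂ = αℤᵈ` with `α > 0` irrational, there is no bounded
set `F ⊆ ℝᵈ` containing exactly one representative from each coset of `Λ₁` and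
exactly one from each coset of `Λ₂`. -/
theorem no_bounded_common_fundamental_domain
    (d : ℕ) (hd : 1 ≤ d) (α : ℝ) (hα : 0 < α) (hirr : Irrational α)
    (F : Set (Fin d → ℝ)) (hFb : Bornology.IsBounded F)
    (h1 : ∀ x : Fin d → ℝ, ∃! y, y ∈ F ∧ ∀ i, ∃ n : ℤ, y i - x i = n)
    (h2 : ∀ x : Fin d → ℝ, ∃! y, y ∈ F ∧ ∀ i, ∃ n : ℤ, y i - x i = n * α) :
    False := by
  obtain ⟨r, hrF⟩ := hFb.subset_closedBall 0
  have hr : ∀ y ∈ F, ∀ i, |y i| ≤ r := by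
    intro y hy i
    have h := hrF hy
    rw [Metric.mem_closedBall, dist_zero_right] at h
    calc |y i| = ‖y i‖ := rfl
      _ ≤ ‖y‖ := norm_le_pi_norm y i
      _ ≤ r := h
  have hex1 : ∀ x : Fin d → ℝ, ∃ y, y ∈ F ∧ ∀ i, ∃ n : ℤ, y i - x i = n * 1 := by
    intro x
    obtain ⟨y, ⟨hyF, hy⟩, _⟩ := h1 x
    exact ⟨y, hyF, fun i => by obtain ⟨n, hn⟩ := hy i; exact ⟨n, by rw [mul_one]; exact hn⟩⟩
  have hex2 : ∀ x : Fin d → ℝ, ∃ y, y ∈ F ∧ ∀ i, ∃ n : ℤ, y i - x i = n * α :=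
    fun x => (h2 x).exists
  have huniq1 : ∀ x : Fin d → ℝ, ∀ y z : Fin d → ℝ,
      (y ∈ F ∧ ∀ i, ∃ n : ℤ, y i - x i = n * 1) →
      (z ∈ F ∧ ∀ i, ∃ n : ℤ, z i - x i = n * 1) → y = z := by
    intro x y z hy hz
    obtain ⟨w, _, hw⟩ := h1 x
    have hy' : y ∈ F ∧ ∀ i, ∃ n : ℤ, y i - x i = n :=
      ⟨hy.1, fun i => by obtain ⟨n, hn⟩ := hy.2 i; exact ⟨n, by rw [mul_one] at hn; exact hn⟩⟩
    have hz' : z ∈ F ∧ ∀ i, ∃ n : ℤ, z i - x i = n :=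
      ⟨hz.1, fun i => by obtain ⟨n, hn⟩ := hz.2 i; exact ⟨n, by rw [mul_one] at hn; exact hn⟩⟩
    rw [hw y hy', hw z hz']
  have huniq2 : ∀ x : Fin d → ℝ, ∀ y z : Fin d → ℝ,
      (y ∈ F ∧ ∀ i, ∃ n : ℤ, y i - x i = n * α) →
      (z ∈ F ∧ ∀ i, ∃ n : ℤ, z i - x i = n * α) → y = z := by
    intro x y z hy hz
    obtain ⟨w, _, hw⟩ := h2 x
    rw [hw y hy, hw z hz]
  have key1 : ∀ N : ℕ, 1 * (N : ℝ) ≤ r + α * N + 1 :=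
    aux_count_cfd d hd 1 α one_pos hα F r hr hex1 huniq2
  have key2 : ∀ N : ℕ, α * (N : ℝ) ≤ r + 1 * N + α :=
    aux_count_cfd d hd α 1 hα one_pos F r hr hex2 huniq1
  have hne1 : α ≠ 1 := fun h => hirr ⟨1, by simp [h]⟩
  have habs : 0 < |α - 1| := abs_pos.mpr (sub_ne_zero.mpr hne1)
  obtain ⟨N, hN⟩ := exists_nat_gt ((r + α + 1) / |α - 1|)
  have hN' : r + α + 1 < |α - 1| * N := by
    rw [div_lt_iff₀ habs] at hN
    linarith [hN]
  have hb1 := key1 N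
  have hb2 := key2 N
  have : |α - 1| * N ≤ r + α + 1 := by
    rcases abs_cases (α - 1) with ⟨he, _⟩ | ⟨he, _⟩ <;> rw [he] <;> nlinarith
  linarith
end

section
/- Let α > 1 be irrational and let G = {m + nα : m, n ∈ ℤ} ⊆ ℝ. There is no bounded set F ⊆ G containing exactly one point from each coset k + αℤ (k ∈ ℤ) and exactly one point from each coset ℤ + kα (k ∈ ℤ). -/
/-- Let `α > 1` be irrational and `G = {m + nα : m, n ∈ ℤ} ⊆ ℝ`. There is no
bounded `F ⊆ G` containing exactly one point of each coset `k + αℤ` and exactly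
one point of each coset `ℤ + kα`. -/
theorem no_bounded_common_fundamental_domain_in_G
    (α : ℝ) (hα : 1 < α) (hirr : Irrational α)
    (F : Set ℝ)
    (hFG : ∀ x ∈ F, ∃ m n : ℤ, x = m + n * α)
    (hFb : ∃ M : ℝ, ∀ x ∈ F, |x| ≤ M)
    (h1 : ∀ k : ℤ, ∃! x, x ∈ F ∧ ∃ n : ℤ, x = k + n * α)
    (h2 : ∀ k : ℤ, ∃! x, x ∈ F ∧ ∃ m : ℤ, x = m + k * α) :
    False := by
  obtain ⟨M, hM⟩ := hFb
  set M' : ℝ := max M 0 with hM'def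
  have hM'0 : (0:ℝ) ≤ M' := le_max_right _ _
  have hα0 : (0:ℝ) < α := by linarith
  choose f hfF hf using fun k => (h1 k).exists
  choose σ hσ using hf
  have hbound : ∀ k : ℤ, |(k:ℝ) + σ k * α| ≤ M' := by
    intro k
    have h := hM (f k) (hfF k)
    rw [hσ k] at h
    exact h.trans (le_max_left _ _)
  have hinj : Function.Injective σ := by
    intro k k' h
    have hk : f k ∈ F ∧ ∃ m : ℤ, f k = m + (σ k : ℝ) * α := ⟨hfF k, k, hσ k⟩
    have hk' : f k' ∈ F ∧ ∃ m : ℤ, f k' = m + (σ k : ℝ) * α :=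
      ⟨hfF k', k', by rw [hσ k', h]⟩
    have heq := (h2 (σ k)).unique hk hk'
    have h3 : (k:ℝ) + (σ k : ℝ) * α = (k':ℝ) + (σ k' : ℝ) * α := by
      rw [← hσ k, ← hσ k', heq]
    rw [h] at h3
    have : (k:ℝ) = (k':ℝ) := by linarith
    exact_mod_cast this
  obtain ⟨N, hN⟩ := exists_nat_ge ((α*(M'+2)+M') / (α-1))
  have hα1 : (0:ℝ) < α - 1 := by linarith
  have hNbig : α*(M'+2)+M' ≤ (α-1) * N := by
    rw [div_le_iff₀ hα1] at hN; linarith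
  set a : ℤ := ⌈(-M' - N) / α⌉ with ha
  set b : ℤ := ⌊M'⌋ with hb
  have hmaps : ∀ k ∈ Finset.Icc (0:ℤ) (N:ℤ), σ k ∈ Finset.Icc a b := by
    intro k hk
    simp only [Finset.mem_Icc] at hk ⊢
    obtain ⟨hk0, hkN⟩ := hk
    have hb1 := abs_le.mp (hbound k)
    have hk0' : (0:ℝ) ≤ (k:ℝ) := by exact_mod_cast hk0
    have hkN' : (k:ℝ) ≤ (N:ℝ) := by exact_mod_cast hkN
    constructor
    · apply Int.ceil_le.mpr
      rw [div_le_iff₀ hα0]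
      nlinarith [hb1.1]
    · apply Int.le_floor.mpr
      rcases le_or_gt (σ k) 0 with h' | h'
      · exact le_trans (by exact_mod_cast h') hM'0
      · have h1' : (1:ℝ) ≤ (σ k : ℝ) := by exact_mod_cast h'
        nlinarith [hb1.2]
  have hcard := Finset.card_le_card_of_injOn σ hmaps (Function.Injective.injOn hinj)
  rw [Int.card_Icc, Int.card_Icc] at hcard
  have hint : (N:ℤ) + 1 ≤ b + 1 - a := by omega
  have hreal : (N:ℝ) + 1 ≤ (b:ℝ) + 1 - (a:ℝ) := by exact_mod_cast hint
  have hbM : (b:ℝ) ≤ M' := Int.floor_le M'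
  have haM : (-M' - N) / α ≤ (a:ℝ) := Int.le_ceil _
  have hd : (-M' - N) / α * α = -M' - N := div_mul_cancel₀ _ (ne_of_gt hα0)
  nlinarith [mul_le_mul_of_nonneg_right haM hα0.le,
    mul_le_mul_of_nonneg_right hreal hα0.le]
end

section
/- Let G be a finite abelian group, G₁, G₂ ≤ G subgroups, and set H = G₁ ∩ G₂, Γ = G/H, Γᵢ = Gᵢ/H. Define S^G_{G₁,G₂} as the minimum of |supp f| over nonnegative f: G → ℝ≥0 with f * 𝟙_{G₁} ≡ |G₁| and f * 𝟙_{G₂} ≡ |G₂|. Then S^G_{G₁,G₂} = S^Γ_{Γ₁,Γ₂}. -/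
open Function Finset
open scoped Classical

section Aux
variable {G : Type*} [AddCommGroup G]

private lemma mem_map_iff' {H K : AddSubgroup G} (hHK : H ≤ K) (g : G) :
    QuotientAddGroup.mk' H g ∈ K.map (QuotientAddGroup.mk' H) ↔ g ∈ K := by
  constructor
  · intro hg
    have : g ∈ (K.map (QuotientAddGroup.mk' H)).comap (QuotientAddGroup.mk' H) := hg
    rwa [AddSubgroup.comap_map_eq, QuotientAddGroup.ker_mk', sup_of_le_left hHK] at this
  · exact fun h => ⟨g, h, rfl⟩

private lemma card_map_mul {H K : AddSubgroup G} [Finite G] (hHK : H ≤ K) :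
    Nat.card K = Nat.card (K.map (QuotientAddGroup.mk' H)) * Nat.card H := by
  let ρ : K →+ G ⧸ H := (QuotientAddGroup.mk' H).comp K.subtype
  have hker : ρ.ker = H.addSubgroupOf K := by
    ext k
    simp [ρ, AddMonoidHom.mem_ker, AddSubgroup.mem_addSubgroupOf,
      QuotientAddGroup.eq_zero_iff]
  have hrange : ρ.range = K.map (QuotientAddGroup.mk' H) := by
    rw [AddMonoidHom.range_comp, AddSubgroup.range_subtype]
  have h1 : Nat.card K = Nat.card (K ⧸ ρ.ker) * Nat.card ρ.ker :=
    AddSubgroup.card_eq_card_quotient_mul_card_addSubgroup ρ.ker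
  rw [h1, Nat.card_congr (QuotientAddGroup.quotientKerEquivRange ρ).toEquiv, hrange,
    hker, Nat.card_congr (AddSubgroup.addSubgroupOfEquivOfLe hHK).toEquiv]

variable [Fintype G]

private lemma finsum_sub_eq (K : AddSubgroup G) (f : G → ℝ) (x : G) :
    ∑ᶠ g : K, f (x - g) = ∑ g ∈ (K : Set G).toFinite.toFinset, f (x - g) := by
  classical
  rw [finsum_eq_sum_of_fintype, Set.Finite.toFinset_eq_toFinset]
  exact Finset.sum_set_coe (f := fun g => f (x - g)) (K : Set G)

/-- Sum over `K` of the lifted function equals `|H|` times the sum over `K/H`. -/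
private lemma lift_sum {H K : AddSubgroup G} (hHK : H ≤ K) (f : G ⧸ H → ℝ) (x : G) :
    ∑ g ∈ (K : Set G).toFinite.toFinset,
        (if Quotient.out (QuotientAddGroup.mk' H (x - g)) = x - g
          then (Nat.card H : ℝ) * f (QuotientAddGroup.mk' H (x - g)) else 0)
      = (Nat.card H : ℝ) *
        ∑ γ ∈ ((K.map (QuotientAddGroup.mk' H) : AddSubgroup (G ⧸ H)) : Set (G ⧸ H)).toFinite.toFinset,
          f (QuotientAddGroup.mk' H x - γ) := by
  classical
  set π := QuotientAddGroup.mk' H with hπ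
  have hout : ∀ q : G ⧸ H, π (Quotient.out q) = q := fun q => by
    rw [hπ, QuotientAddGroup.mk'_apply, QuotientAddGroup.out_eq']
  have hmap : ∀ g ∈ (K : Set G).toFinite.toFinset,
      π g ∈ ((K.map π : AddSubgroup (G ⧸ H)) : Set (G ⧸ H)).toFinite.toFinset := by
    intro g hg
    simp only [Set.Finite.mem_toFinset, SetLike.mem_coe] at hg ⊢
    exact ⟨g, hg, rfl⟩
  rw [← Finset.sum_fiberwise_of_maps_to hmap
    (fun g => if Quotient.out (π (x - g)) = x - g then (Nat.card H : ℝ) * f (π (x - g)) else 0),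
    Finset.mul_sum]
  refine Finset.sum_congr rfl fun γ hγ => ?_
  simp only [Set.Finite.mem_toFinset, SetLike.mem_coe] at hγ
  have hg₀mem : x - Quotient.out (π x - γ) ∈ K := by
    rw [← mem_map_iff' hHK]
    show π _ ∈ _
    rw [map_sub, hout, sub_sub_cancel]
    exact hγ
  have hπg₀ : π (x - Quotient.out (π x - γ)) = γ := by
    rw [map_sub, hout, sub_sub_cancel]
  rw [Finset.sum_eq_single (x - Quotient.out (π x - γ))]
  · rw [sub_sub_cancel, hout, if_pos rfl]
  · intro g hg hne
    simp only [Finset.mem_filter, Set.Finite.mem_toFinset, SetLike.mem_coe] at hg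
    rw [if_neg]
    intro hcon
    apply hne
    have : π (x - g) = π x - γ := by rw [map_sub, hg.2]
    rw [this] at hcon
    rw [hcon, sub_sub_cancel]
  · intro hcon
    exact absurd (Finset.mem_filter.mpr ⟨(Set.Finite.mem_toFinset _).mpr hg₀mem, hπg₀⟩) hcon

/-- Fiberwise sum identity for pushing a function down to the quotient. -/
private lemma push_sum {H K : AddSubgroup G} (hHK : H ≤ K) (F : G → ℝ) (δ : G ⧸ H) :
    ∑ γ ∈ ((K.map (QuotientAddGroup.mk' H) : AddSubgroup (G ⧸ H)) : Set (G ⧸ H)).toFinite.toFinset,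
        ∑ y ∈ Finset.univ.filter (fun y => QuotientAddGroup.mk' H y = δ - γ), F y
      = ∑ g ∈ (K : Set G).toFinite.toFinset, F (Quotient.out δ - g) := by
  classical
  set π := QuotientAddGroup.mk' H with hπ
  have hout : ∀ q : G ⧸ H, π (Quotient.out q) = q := fun q => by
    rw [hπ, QuotientAddGroup.mk'_apply, QuotientAddGroup.out_eq']
  have hmap : ∀ g ∈ (K : Set G).toFinite.toFinset,
      π g ∈ ((K.map π : AddSubgroup (G ⧸ H)) : Set (G ⧸ H)).toFinite.toFinset := by
    intro g hg
    simp only [Set.Finite.mem_toFinset, SetLike.mem_coe] at hg ⊢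
    exact ⟨g, hg, rfl⟩
  rw [← Finset.sum_fiberwise_of_maps_to hmap (fun g => F (Quotient.out δ - g))]
  refine Finset.sum_congr rfl fun γ hγ => ?_
  simp only [Set.Finite.mem_toFinset, SetLike.mem_coe] at hγ
  refine Finset.sum_nbij' (fun y => Quotient.out δ - y) (fun g => Quotient.out δ - g)
    ?_ ?_ ?_ ?_ ?_
  · intro y hy
    simp only [Finset.mem_filter, Finset.mem_univ, true_and] at hy
    have h1 : π (Quotient.out δ - y) = γ := by
      rw [map_sub, hout, hy, sub_sub_cancel]
    simp only [Finset.mem_filter, Set.Finite.mem_toFinset, SetLike.mem_coe]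
    exact ⟨(mem_map_iff' hHK _).mp (h1 ▸ hγ), h1⟩
  · intro g hg
    simp only [Finset.mem_filter, Set.Finite.mem_toFinset, SetLike.mem_coe] at hg
    refine Finset.mem_filter.mpr ⟨Finset.mem_univ _, ?_⟩
    rw [map_sub, hout, hg.2]
  · intro y _; exact sub_sub_cancel _ _
  · intro g _; exact sub_sub_cancel _ _
  · intro y _; rw [sub_sub_cancel]

end Aux

section Main
open Function

private lemma minSupp_set_nonempty' {G : Type*} [AddCommGroup G] [Finite G]
    (G₁ G₂ : AddSubgroup G) :
    {n : ℕ | ∃ f : G → ℝ, (∀ x, 0 ≤ f x) ∧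
      (∀ x, ∑ᶠ g : G₁, f (x - g) = Nat.card G₁) ∧
      (∀ x, ∑ᶠ g : G₂, f (x - g) = Nat.card G₂) ∧
      n = (Function.support f).ncard}.Nonempty := by
  classical
  haveI : Fintype G := Fintype.ofFinite G
  refine ⟨(Function.support (fun _ : G => (1:ℝ))).ncard, fun _ => 1, fun _ => zero_le_one,
    ?_, ?_, rfl⟩ <;>
  · intro x
    rw [finsum_eq_sum_of_fintype, Finset.sum_const, Finset.card_univ, nsmul_eq_mul, mul_one,
      Nat.card_eq_fintype_card]

/-- The minimal support size of a nonnegative function on the finite abelian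
group `G` tiling with both subgroups `G₁, G₂` at levels `|G₁|, |G₂|`. -/
noncomputable def minSupp {G : Type*} [AddCommGroup G] [Finite G]
    (G₁ G₂ : AddSubgroup G) : ℕ :=
  sInf {n : ℕ | ∃ f : G → ℝ, (∀ x, 0 ≤ f x) ∧
    (∀ x, ∑ᶠ g : G₁, f (x - g) = Nat.card G₁) ∧
    (∀ x, ∑ᶠ g : G₂, f (x - g) = Nat.card G₂) ∧
    n = (Function.support f).ncard}

/-- Reduction to trivial intersection: with `H = G₁ ∩ G₂`, `Γ = G/H`,
`Γᵢ = Gᵢ/H`, we have `S^G_{G₁,G₂} = S^Γ_{Γ₁,Γ₂}`. -/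
theorem minSupp_quotient {G : Type*} [AddCommGroup G] [Finite G]
    (G₁ G₂ : AddSubgroup G) :
    minSupp G₁ G₂ =
      minSupp (G₁.map (QuotientAddGroup.mk' (G₁ ⊓ G₂)))
              (G₂.map (QuotientAddGroup.mk' (G₁ ⊓ G₂))) := by
  classical
  haveI : Fintype G := Fintype.ofFinite G
  haveI : Fintype (G ⧸ (G₁ ⊓ G₂)) := Fintype.ofFinite _
  unfold minSupp
  set H := G₁ ⊓ G₂ with hHdef
  set π := QuotientAddGroup.mk' H with hπ
  have h1 : H ≤ G₁ := inf_le_left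
  have h2 : H ≤ G₂ := inf_le_right
  have hout : ∀ q : G ⧸ H, π (Quotient.out q) = q := fun q => by
    rw [hπ, QuotientAddGroup.mk'_apply, QuotientAddGroup.out_eq']
  have hc0 : (0:ℝ) < (Nat.card H : ℝ) := by exact_mod_cast Nat.card_pos
  apply le_antisymm
  · -- lift a minimizer on the quotient
    obtain ⟨f, hf0, hf1, hf2, hfn⟩ :=
      Nat.sInf_mem (minSupp_set_nonempty' (G₁.map π) (G₂.map π))
    apply Nat.sInf_le
    refine ⟨fun x => if Quotient.out (π x) = x then (Nat.card H : ℝ) * f (π x) else 0,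
      ?_, ?_, ?_, ?_⟩
    · intro x; dsimp only; split
      · exact mul_nonneg hc0.le (hf0 _)
      · exact le_refl 0
    · intro x
      refine (finsum_sub_eq G₁
        (fun y => if Quotient.out (π y) = y then (Nat.card H : ℝ) * f (π y) else 0) x).trans ?_
      beta_reduce
      rw [lift_sum h1 f x]
      have hh := hf1 (π x)
      rw [finsum_sub_eq] at hh
      rw [hh, card_map_mul (H := H) (K := G₁) h1]
      push_cast
      ring
    · intro x
      refine (finsum_sub_eq G₂
        (fun y => if Quotient.out (π y) = y then (Nat.card H : ℝ) * f (π y) else 0) x).trans ?_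
      beta_reduce
      rw [lift_sum h2 f x]
      have hh := hf2 (π x)
      rw [finsum_sub_eq] at hh
      rw [hh, card_map_mul (H := H) (K := G₂) h2]
      push_cast
      ring
    · rw [hfn]
      have hsupp : Function.support
          (fun x => if Quotient.out (π x) = x then (Nat.card H : ℝ) * f (π x) else 0)
          = Quotient.out '' Function.support f := by
        ext x
        simp only [Function.mem_support, Set.mem_image]
        constructor
        · intro hx
          by_cases hcond : Quotient.out (π x) = x
          · refine ⟨π x, ?_, hcond⟩
            intro h0
            apply hx
            rw [if_pos hcond, h0, mul_zero]
          · exact absurd (if_neg hcond) hx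
        · rintro ⟨γ, hγ, rfl⟩
          have hπγ : π (Quotient.out γ) = γ := hout γ
          rw [hπγ, if_pos rfl]
          exact mul_ne_zero hc0.ne' hγ
      rw [hsupp, Set.ncard_image_of_injective _ Quotient.out_injective]
  · -- push a minimizer down to the quotient
    obtain ⟨F, hF0, hF1, hF2, hFn⟩ := Nat.sInf_mem (minSupp_set_nonempty' G₁ G₂)
    set f : G ⧸ H → ℝ :=
      fun γ => (∑ y ∈ Finset.univ.filter (fun y => π y = γ), F y) / (Nat.card H : ℝ)
      with hfdef
    have hf0 : ∀ γ, 0 ≤ f γ :=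
      fun γ => div_nonneg (Finset.sum_nonneg fun y _ => hF0 y) hc0.le
    have hcon : ∀ (K : AddSubgroup G), H ≤ K →
        (∀ x, ∑ᶠ g : K, F (x - g) = Nat.card K) →
        ∀ δ : G ⧸ H, ∑ᶠ γ : K.map π, f (δ - γ) = Nat.card (K.map π) := by
      intro K hK hFK δ
      rw [finsum_sub_eq]
      have hrw : ∀ γ ∈ ((K.map π : AddSubgroup (G ⧸ H)) : Set (G ⧸ H)).toFinite.toFinset,
          f (δ - γ) = (∑ y ∈ Finset.univ.filter (fun y => π y = δ - γ), F y) /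
            (Nat.card H : ℝ) := fun _ _ => rfl
      rw [Finset.sum_congr rfl hrw, ← Finset.sum_div, push_sum hK F δ]
      have hh := hFK (Quotient.out δ)
      rw [finsum_sub_eq] at hh
      rw [hh, card_map_mul (H := H) hK]
      push_cast
      rw [mul_div_assoc, div_self hc0.ne', mul_one]
    have hw : ∀ γ ∈ Function.support f, ∃ y, π y = γ ∧ F y ≠ 0 := by
      intro γ hγ
      rw [Function.mem_support] at hγ
      have hsum : ∑ y ∈ Finset.univ.filter (fun y => π y = γ), F y ≠ 0 := by
        intro h0
        apply hγ
        rw [hfdef]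
        dsimp only
        rw [h0, zero_div]
      obtain ⟨y, hy, hy0⟩ := Finset.exists_ne_zero_of_sum_ne_zero hsum
      exact ⟨y, (Finset.mem_filter.mp hy).2, hy0⟩
    set w : G ⧸ H → G := fun γ => if h : ∃ y, π y = γ ∧ F y ≠ 0 then h.choose else 0
      with hwdef
    have hws : ∀ γ ∈ Function.support f, π (w γ) = γ ∧ F (w γ) ≠ 0 := by
      intro γ hγ
      have h := hw γ hγ
      rw [hwdef]
      dsimp only
      rw [dif_pos h]
      exact h.choose_spec
    have hsupple : (Function.support f).ncard ≤ (Function.support F).ncard := by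
      refine Set.ncard_le_ncard_of_injOn w
        (fun γ hγ => Function.mem_support.mpr (hws γ hγ).2) ?_ (Set.toFinite _)
      intro γ₁ hγ₁ γ₂ hγ₂ he
      rw [← (hws γ₁ hγ₁).1, ← (hws γ₂ hγ₂).1, he]
    refine le_trans (Nat.sInf_le ⟨f, hf0, hcon G₁ h1 hF1, hcon G₂ h2 hF2, rfl⟩) ?_
    rw [hFn]
    exact hsupple

end Main
end

section
/- Let G = G₁ × G₂ be a product of finite abelian groups with |G₁| dividing |G₂|. Then there exists a set F ⊆ G with |F| = |G₂| such that f = |G₁|·𝟙_F satisfies f * 𝟙_{G₁×{0}} ≡ |G₁| and f * 𝟙_{{0}×G₂} ≡ |G₂|. Consequently S^G_{G₁,G₂} = |G₂| = [G : G₁]. -/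
open Function

/-- If `|G₁|` divides `|G₂|` then there is a set `F` with `|F| = |G₂|` such that
`|G₁|·𝟙_F` tiles with `G₁×{0}` at level `|G₁|` and with `{0}×G₂` at level
`|G₂|`; consequently `S^{G₁×G₂}_{G₁,G₂} = |G₂| = [G : G₁]`. -/
theorem minSupp_of_dvd {G₁ G₂ : Type*} [AddCommGroup G₁] [AddCommGroup G₂]
    [Finite G₁] [Finite G₂] (hdvd : Nat.card G₁ ∣ Nat.card G₂) :
    (∃ F : Set (G₁ × G₂), F.ncard = Nat.card G₂ ∧
      (∀ x : G₁ × G₂,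
        ∑ᶠ g : ((⊤ : AddSubgroup G₁).prod (⊥ : AddSubgroup G₂)),
          (Nat.card G₁ : ℝ) * F.indicator 1 (x - g) = Nat.card G₁) ∧
      (∀ x : G₁ × G₂,
        ∑ᶠ g : ((⊥ : AddSubgroup G₁).prod (⊤ : AddSubgroup G₂)),
          (Nat.card G₁ : ℝ) * F.indicator 1 (x - g) = Nat.card G₂)) ∧
    minSupp ((⊤ : AddSubgroup G₁).prod (⊥ : AddSubgroup G₂))
            ((⊥ : AddSubgroup G₁).prod (⊤ : AddSubgroup G₂)) = Nat.card G₂ ∧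
    Nat.card G₂ = ((⊤ : AddSubgroup G₁).prod (⊥ : AddSubgroup G₂)).index := by
  classical
  haveI : Fintype G₁ := Fintype.ofFinite _
  haveI : Fintype G₂ := Fintype.ofFinite _
  have hc1 : 0 < Nat.card G₁ := Nat.card_pos
  have hc2 : 0 < Nat.card G₂ := Nat.card_pos
  set n₁ := Nat.card G₁ with hn₁
  set m := Nat.card G₂ / n₁ with hm
  have hmul : n₁ * m = Nat.card G₂ := Nat.mul_div_cancel' hdvd
  set H₁ := ((⊤ : AddSubgroup G₁).prod (⊥ : AddSubgroup G₂)) with hH₁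
  set H₂ := ((⊥ : AddSubgroup G₁).prod (⊤ : AddSubgroup G₂)) with hH₂
  -- the index computation
  have hmemH₁ : ∀ a : G₁ × G₂, a ∈ H₁ ↔ a.2 = 0 := by
    intro a; rw [hH₁, AddSubgroup.mem_prod]; simp
  have hmemH₂ : ∀ a : G₁ × G₂, a ∈ H₂ ↔ a.1 = 0 := by
    intro a; rw [hH₂, AddSubgroup.mem_prod]; simp
  let e₁ : G₁ ≃ H₁ :=
    { toFun := fun g => ⟨(g, 0), (hmemH₁ (g, 0)).2 rfl⟩
      invFun := fun g => (g : G₁ × G₂).1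
      left_inv := fun g => rfl
      right_inv := by
        rintro ⟨⟨a, b⟩, hab⟩
        have : b = 0 := (hmemH₁ (a, b)).1 hab
        simp [this]  }
  let e₂ : G₂ ≃ H₂ :=
    { toFun := fun g => ⟨(0, g), (hmemH₂ (0, g)).2 rfl⟩
      invFun := fun g => (g : G₁ × G₂).2
      left_inv := fun g => rfl
      right_inv := by
        rintro ⟨⟨a, b⟩, hab⟩
        have : a = 0 := (hmemH₂ (a, b)).1 hab
        simp [this]  }
  have hcardH₁ : Nat.card H₁ = n₁ := (Nat.card_congr e₁).symm
  have hcardH₂ : Nat.card H₂ = Nat.card G₂ := (Nat.card_congr e₂).symm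
  have hindex : H₁.index = Nat.card G₂ := by
    have h := AddSubgroup.index_mul_card H₁
    rw [hcardH₁, Nat.card_prod] at h
    exact Nat.eq_of_mul_eq_mul_right hc1 (by rw [h]; ring)
  -- equivalence used to build the graph
  have ecard : Fintype.card G₂ = Fintype.card (G₁ × Fin m) := by
    simp only [Fintype.card_prod, Fintype.card_fin]
    rw [← Nat.card_eq_fintype_card, ← Nat.card_eq_fintype_card, ← hmul, hn₁]
  let e : G₂ ≃ G₁ × Fin m := Fintype.equivOfCardEq ecard
  let φ : G₂ → G₁ := fun y => (e y).1
  set F : Set (G₁ × G₂) := Set.range (fun y : G₂ => (φ y, y)) with hF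
  have hmem : ∀ p : G₁ × G₂, p ∈ F ↔ p.1 = φ p.2 := by
    intro p
    constructor
    · rintro ⟨y, rfl⟩; rfl
    · obtain ⟨a, b⟩ := p
      intro h
      exact ⟨b, by simp only at h; rw [h]⟩
  -- F has the right cardinality
  have hinj : Function.Injective (fun y : G₂ => (φ y, y)) := by
    intro a b hab
    exact congrArg Prod.snd hab
  have hFcard : F.ncard = Nat.card G₂ := by
    rw [hF, ← Nat.card_coe_set_eq, Nat.card_range_of_injective hinj]
  -- the tiling identities
  have key₁ : ∀ x : G₁ × G₂,
      ∑ᶠ g : H₁, (n₁ : ℝ) * F.indicator 1 (x - g) = n₁ := by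
    rintro ⟨x₁, x₂⟩
    rw [finsum_eq_sum_of_fintype, ← Equiv.sum_comp e₁]
    have : ∀ g : G₁, (n₁ : ℝ) * F.indicator 1 ((x₁, x₂) - (e₁ g : G₁ × G₂)) =
        if g = x₁ - φ x₂ then (n₁ : ℝ) else 0 := by
      intro g
      have hx : ((x₁, x₂) - (e₁ g : G₁ × G₂)) = (x₁ - g, x₂) := by
        show ((x₁, x₂) - (g, 0) : G₁ × G₂) = _
        simp [Prod.ext_iff]
      rw [hx, Set.indicator_apply]
      have : (x₁ - g, x₂) ∈ F ↔ g = x₁ - φ x₂ := by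
        rw [hmem]
        constructor
        · intro h; simp only at h; rw [← h]; abel
        · intro h; simp only; rw [h]; abel
      by_cases hg : g = x₁ - φ x₂
      · rw [if_pos (this.2 hg), if_pos hg]; simp
      · rw [if_neg (fun hc => hg (this.1 hc)), if_neg hg]; simp
    rw [Finset.sum_congr rfl (fun g _ => this g), Finset.sum_ite_eq' Finset.univ]
    simp
  have key₂ : ∀ x : G₁ × G₂,
      ∑ᶠ g : H₂, (n₁ : ℝ) * F.indicator 1 (x - g) = Nat.card G₂ := by
    rintro ⟨x₁, x₂⟩
    rw [finsum_eq_sum_of_fintype, ← Equiv.sum_comp e₂]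
    have step : ∀ g : G₂, (n₁ : ℝ) * F.indicator 1 ((x₁, x₂) - (e₂ g : G₁ × G₂)) =
        if φ (x₂ - g) = x₁ then (n₁ : ℝ) else 0 := by
      intro g
      have hx : ((x₁, x₂) - (e₂ g : G₁ × G₂)) = (x₁, x₂ - g) := by
        show ((x₁, x₂) - (0, g) : G₁ × G₂) = _
        simp [Prod.ext_iff]
      rw [hx, Set.indicator_apply]
      have hmm : (x₁, x₂ - g) ∈ F ↔ φ (x₂ - g) = x₁ := by
        rw [hmem]; exact eq_comm
      by_cases hg : φ (x₂ - g) = x₁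
      · rw [if_pos (hmm.2 hg), if_pos hg]; simp
      · rw [if_neg (fun hc => hg (hmm.1 hc)), if_neg hg]; simp
    rw [Finset.sum_congr rfl (fun g _ => step g)]
    have hbij : ∑ g : G₂, (if φ (x₂ - g) = x₁ then (n₁ : ℝ) else 0) =
        ∑ y : G₂, (if φ y = x₁ then (n₁ : ℝ) else 0) :=
      Equiv.sum_comp (Equiv.subLeft x₂) (fun y => if φ y = x₁ then (n₁ : ℝ) else 0)
    rw [hbij, ← Equiv.sum_comp e.symm (fun y => if φ y = x₁ then (n₁ : ℝ) else 0)]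
    have : ∀ p : G₁ × Fin m, (if φ (e.symm p) = x₁ then (n₁ : ℝ) else 0) =
        if p.1 = x₁ then (n₁ : ℝ) else 0 := by
      intro p
      have : φ (e.symm p) = p.1 := by simp [φ]
      rw [this]
    rw [Finset.sum_congr rfl (fun p _ => this p), Fintype.sum_prod_type]
    have hsc : ∀ a : G₁, (∑ _b : Fin m, (if a = x₁ then (n₁ : ℝ) else 0)) =
        if a = x₁ then ((m * n₁ : ℕ) : ℝ) else 0 := by
      intro a
      rw [Finset.sum_const, Finset.card_univ, Fintype.card_fin]
      by_cases h : a = x₁ <;> simp [h]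
    rw [Finset.sum_congr rfl (fun a _ => hsc a), Finset.sum_ite_eq' Finset.univ]
    simp only [Finset.mem_univ, if_true]
    rw [mul_comm m n₁, hmul]
  refine ⟨⟨F, hFcard, key₁, key₂⟩, ?_, ?_⟩
  · -- minSupp computation
    have hmemset : Nat.card G₂ ∈ {n : ℕ | ∃ f : G₁ × G₂ → ℝ, (∀ x, 0 ≤ f x) ∧
        (∀ x, ∑ᶠ g : H₁, f (x - g) = Nat.card H₁) ∧
        (∀ x, ∑ᶠ g : H₂, f (x - g) = Nat.card H₂) ∧
        n = (Function.support f).ncard} := by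
      refine ⟨fun x => (n₁ : ℝ) * F.indicator 1 x, ?_, ?_, ?_, ?_⟩
      · intro x
        exact mul_nonneg (Nat.cast_nonneg _)
          (Set.indicator_nonneg (fun _ _ => zero_le_one) x)
      · intro x; rw [hcardH₁]; exact key₁ x
      · intro x; rw [hcardH₂]; exact key₂ x
      · have hsupp : Function.support (fun x => (n₁ : ℝ) * F.indicator 1 x) = F := by
          ext x
          simp only [Function.mem_support, mul_ne_zero_iff, Set.indicator_apply]
          constructor
          · rintro ⟨-, h⟩
            by_contra hx
            exact h (if_neg hx)
          · intro hx
            refine ⟨Nat.cast_ne_zero.2 hc1.ne', ?_⟩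
            rw [if_pos hx]
            norm_num
        rw [hsupp, hFcard]
    have hlb : ∀ n ∈ {n : ℕ | ∃ f : G₁ × G₂ → ℝ, (∀ x, 0 ≤ f x) ∧
        (∀ x, ∑ᶠ g : H₁, f (x - g) = Nat.card H₁) ∧
        (∀ x, ∑ᶠ g : H₂, f (x - g) = Nat.card H₂) ∧
        n = (Function.support f).ncard}, Nat.card G₂ ≤ n := by
      rintro n ⟨f, h0, h1, -, rfl⟩
      -- the support meets every coset of H₁
      have hsurj : Function.Surjective
          (fun y : Function.support f => QuotientAddGroup.mk (s := H₁) (y : G₁ × G₂)) := by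
        intro z
        obtain ⟨x, rfl⟩ := QuotientAddGroup.mk_surjective z
        have hsum := h1 x
        have : ∃ g : H₁, f (x - g) ≠ 0 := by
          by_contra hc
          push_neg at hc
          rw [finsum_eq_sum_of_fintype] at hsum
          have : (∑ g : H₁, f (x - g)) = 0 := Finset.sum_eq_zero fun g _ => hc g
          rw [this] at hsum
          rw [hcardH₁] at hsum
          exact (Nat.cast_pos.2 hc1).ne' hsum.symm
        obtain ⟨g, hg⟩ := this
        refine ⟨⟨x - g, hg⟩, ?_⟩
        show QuotientAddGroup.mk (x - g) = QuotientAddGroup.mk x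
        rw [QuotientAddGroup.eq]
        have : -(x - (g : G₁ × G₂)) + x = (g : G₁ × G₂) := by abel
        rw [this]
        exact g.2
      have hle : Nat.card ((G₁ × G₂) ⧸ H₁) ≤ Nat.card (Function.support f) :=
        Nat.card_le_card_of_surjective _ hsurj
      rw [Nat.card_coe_set_eq] at hle
      calc Nat.card G₂ = H₁.index := hindex.symm
        _ = Nat.card ((G₁ × G₂) ⧸ H₁) := rfl
        _ ≤ (Function.support f).ncard := hle
    exact le_antisymm (Nat.sInf_le hmemset) (le_csInf ⟨_, hmemset⟩ hlb)
  · exact hindex.symm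
end

section
/- Let A be an m × n matrix with nonnegative real entries, all row sums equal to n and all column sums equal to m, where n = km + r with k ≥ 1 and 1 ≤ r < m. Then A has at least (k+1)m nonzero entries. -/
/-- An `m × n` nonnegative matrix with row sums `n` and column sums `m`, where
`n = km + r`, `k ≥ 1`, `1 ≤ r < m`, has at least `(k+1)m` nonzero entries. -/
theorem support_lower_bound_matrix (m n k r : ℕ)
    (hk : 1 ≤ k) (hr : 1 ≤ r) (hrm : r < m) (hn : n = k * m + r)
    (A : Matrix (Fin m) (Fin n) ℝ)
    (hA : ∀ i j, 0 ≤ A i j)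
    (hrow : ∀ i, ∑ j, A i j = (n : ℝ))
    (hcol : ∀ j, ∑ i, A i j = (m : ℝ)) :
    (k + 1) * m ≤ {p : Fin m × Fin n | A p.1 p.2 ≠ 0}.ncard := by
  classical
  -- entries are bounded by m
  have hbound : ∀ i j, A i j ≤ (m : ℝ) := by
    intro i j
    rw [← hcol j]
    exact Finset.single_le_sum (fun i' _ => hA i' j) (Finset.mem_univ i)
  -- each row has at least k+1 nonzero entries
  have hrowcard : ∀ i, k + 1 ≤ (Finset.univ.filter fun j => A i j ≠ 0).card := by
    intro i
    by_contra h
    push_neg at h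
    have hle : (Finset.univ.filter fun j => A i j ≠ 0).card ≤ k := by omega
    have hsum : (n : ℝ) ≤ ((Finset.univ.filter fun j => A i j ≠ 0).card : ℝ) * m := by
      rw [← hrow i]
      have : ∑ j, A i j = ∑ j ∈ Finset.univ.filter fun j => A i j ≠ 0, A i j := by
        rw [Finset.sum_filter_ne_zero]
      rw [this]
      calc ∑ j ∈ Finset.univ.filter fun j => A i j ≠ 0, A i j
          ≤ ∑ _j ∈ Finset.univ.filter fun j => A i j ≠ 0, (m : ℝ) :=
            Finset.sum_le_sum (fun j _ => hbound i j)
        _ = _ := by rw [Finset.sum_const, nsmul_eq_mul]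
    have hsum' : (n : ℝ) ≤ (k : ℝ) * m := by
      refine hsum.trans (mul_le_mul_of_nonneg_right ?_ (Nat.cast_nonneg m))
      exact_mod_cast hle
    have : (n : ℝ) = (k : ℝ) * m + r := by rw [hn]; push_cast; ring
    have hr' : (1 : ℝ) ≤ r := by exact_mod_cast hr
    linarith
  -- total count
  have hset : {p : Fin m × Fin n | A p.1 p.2 ≠ 0} =
      ↑(Finset.univ.filter fun p : Fin m × Fin n => A p.1 p.2 ≠ 0) := by
    ext p; simp
  rw [hset, Set.ncard_coe_finset]
  have hcardeq : (Finset.univ.filter fun p : Fin m × Fin n => A p.1 p.2 ≠ 0).card =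
      ∑ i, (Finset.univ.filter fun j => A i j ≠ 0).card := by
    rw [Finset.card_eq_sum_card_fiberwise (f := Prod.fst) (t := Finset.univ)
      (fun p _ => Finset.mem_univ _)]
    refine Finset.sum_congr rfl fun i _ => ?_
    refine Finset.card_bij' (fun p _ => p.2) (fun j _ => (i, j)) ?_ ?_ ?_ ?_
    · intro p hp
      simp only [Finset.mem_filter, Finset.mem_univ, true_and] at hp ⊢
      rw [← hp.2]; exact hp.1
    · intro j hj
      simp only [Finset.mem_filter, Finset.mem_univ, true_and] at hj ⊢
      exact ⟨hj, trivial⟩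
    · intro p hp
      simp only [Finset.mem_filter, Finset.mem_univ, true_and] at hp
      exact Prod.ext hp.2.symm rfl
    · intro j hj; rfl
  rw [hcardeq]
  calc (k + 1) * m = ∑ _i : Fin m, (k + 1) := by
        rw [Finset.sum_const, Finset.card_univ, Fintype.card_fin, smul_eq_mul, mul_comm]
    _ ≤ _ := Finset.sum_le_sum fun i _ => hrowcard i
end

section
/- For every m ≥ 2 and k ≥ 1 there exists an m × (km+1) matrix with nonnegative real entries, all row sums equal to km+1, all column sums equal to m, and exactly (k+1)m nonzero entries. Hence S(m, km+1) = (k+1)m. -/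
open Finset

lemma clamp_sub (a b x y : ℝ) (hab : a ≤ b) (hxy : x ≤ y) :
    max 0 (min b y - max a x) = min b (max a y) - min b (max a x) := by
  rcases le_total b y with h1 | h1 <;> rcases le_total a x with h2 | h2 <;>
    simp only [min_def, max_def] <;> split_ifs <;> linarith

lemma sum_clamp (a b : ℝ) (N : ℕ) (g : ℕ → ℝ) (hg : ∀ j, g j ≤ g (j+1))
    (hab : a ≤ b) (h0 : g 0 ≤ a) (hN : b ≤ g N) :
    ∑ j ∈ Finset.range N, max 0 (min b (g (j+1)) - max a (g j)) = b - a := by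
  have h : ∀ j, max 0 (min b (g (j+1)) - max a (g j))
      = min b (max a (g (j+1))) - min b (max a (g j)) :=
    fun j => clamp_sub a b (g j) (g (j+1)) hab (hg j)
  simp_rw [h]
  rw [Finset.sum_range_sub (fun j => min b (max a (g j)))]
  have e1 : min b (max a (g N)) = b := min_eq_left (le_trans hN (le_max_right _ _))
  have e2 : min b (max a (g 0)) = a := by rw [max_eq_left h0, min_eq_right hab]
  rw [e1, e2]

lemma fin_filter_card {n : ℕ} (Q : ℕ → Prop) [DecidablePred Q] :
    (Finset.univ.filter fun j : Fin n => Q j.val).card = ((Finset.range n).filter Q).card := by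
  rw [Finset.card_filter, Finset.card_filter,
    ← Fin.sum_univ_eq_sum_range (fun j => if Q j then 1 else 0)]

lemma card_filter_prod {m n : ℕ} (P : Fin m → Fin n → Prop)
    [∀ i j, Decidable (P i j)] :
    (Finset.univ.filter fun p : Fin m × Fin n => P p.1 p.2).card
      = ∑ i, (Finset.univ.filter fun j => P i j).card := by
  simp_rw [Finset.card_filter]
  rw [Fintype.sum_prod_type]

lemma ndvd (m k i : ℕ) (h0 : 0 < i) (him : i < m) : ¬ m ∣ i * (k*m+1) := by
  intro h
  have h2 : m ∣ i * k * m := Dvd.intro_left _ rfl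
  have h3 : m ∣ i := by
    have he : i * (k*m+1) = i * k * m + i := by ring
    rw [he] at h
    exact (Nat.dvd_add_right h2).mp h
  exact absurd (Nat.le_of_dvd h0 h3) (by omega)

lemma row_filter_eq (m k i : ℕ) (hm : 0 < m) (hi : i < m) :
    ((Finset.range (k*m+1)).filter
      fun j => i*(k*m+1) < (j+1)*m ∧ j*m < (i+1)*(k*m+1))
      = Finset.Ico (i*(k*m+1)/m) (min ((i+1)*(k*m+1)/m + 1) (k*m+1)) := by
  set n := k*m+1 with hn
  ext j
  simp only [mem_filter, mem_range, mem_Ico, lt_min_iff]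
  constructor
  · rintro ⟨hj, h1, h2⟩
    refine ⟨?_, ?_, hj⟩
    · have := (Nat.div_lt_iff_lt_mul hm).mpr h1
      omega
    · have : j ≤ (i+1)*n/m := (Nat.le_div_iff_mul_le hm).mpr h2.le
      omega
  · rintro ⟨h1, h2, hj⟩
    refine ⟨hj, ?_, ?_⟩
    · exact (Nat.div_lt_iff_lt_mul hm).mp (by omega)
    · have hle : j*m ≤ (i+1)*n := (Nat.le_div_iff_mul_le hm).mp (by omega)
      rcases lt_or_eq_of_le hle with h | he
      · exact h
      · by_cases him : i + 1 < m
        · exact absurd ⟨j, by rw [← he]; ring⟩ (ndvd m k (i+1) (by omega) him)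
        · have he2 : i + 1 = m := by omega
          rw [he2] at he
          have : j = n := Nat.eq_of_mul_eq_mul_right hm (by rw [he]; ring)
          omega

lemma telescope_sum (m k : ℕ) (hm : 2 ≤ m) :
    ∑ i ∈ Finset.range m,
      (min ((i+1)*(k*m+1)/m + 1) (k*m+1) - i*(k*m+1)/m) = m + k*m := by
  have hm0 : 0 < m := by omega
  set n := k*m+1 with hn
  have hnpos : 0 < n := by omega
  have key : ∀ r, r < m → ∑ i ∈ Finset.range r,
      (min ((i+1)*n/m + 1) n - i*n/m) = r + r*n/m := by
    intro r
    induction r with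
    | zero => simp
    | succ r ih =>
      intro hr
      rw [Finset.sum_range_succ, ih (by omega)]
      have h1 : (r+1)*n/m + 1 ≤ n := by
        have : (r+1)*n/m < n := (Nat.div_lt_iff_lt_mul hm0).mpr (by nlinarith)
        omega
      have hmono : r*n/m ≤ (r+1)*n/m := Nat.div_le_div_right (by nlinarith)
      rw [min_eq_left h1]
      omega
  have hsplit : Finset.range m = Finset.range ((m-1) + 1) := by
    congr 1; omega
  rw [hsplit, Finset.sum_range_succ, key (m-1) (by omega)]
  have hlast : (m-1+1)*n/m = n := by
    rw [show m-1+1 = m by omega, Nat.mul_div_cancel_left _ hm0]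
  rw [hlast, min_eq_right (by omega)]
  have hle : (m-1)*n/m ≤ n := by
    refine le_trans (Nat.div_le_div_right (Nat.mul_le_mul (by omega) le_rfl : (m-1)*n ≤ m*n)) ?_
    rw [Nat.mul_div_cancel_left _ hm0]
  omega



/-- `S m n`: the minimal number of nonzero entries of a nonnegative `m × n`
matrix with all row sums `n` and all column sums `m`. -/
noncomputable def S (m n : ℕ) : ℕ :=
  sInf {s : ℕ | ∃ A : Matrix (Fin m) (Fin n) ℝ,
    (∀ i j, 0 ≤ A i j) ∧
    (∀ i, ∑ j, A i j = (n : ℝ)) ∧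
    (∀ j, ∑ i, A i j = (m : ℝ)) ∧
    s = {p : Fin m × Fin n | A p.1 p.2 ≠ 0}.ncard}

/-- For `m ≥ 2`, `k ≥ 1` there is an `m × (km+1)` nonnegative matrix with row
sums `km+1`, column sums `m` and exactly `(k+1)m` nonzero entries; hence
`S(m, km+1) = (k+1)m`. -/
theorem S_m_km_add_one (m k : ℕ) (hm : 2 ≤ m) (hk : 1 ≤ k) :
    (∃ A : Matrix (Fin m) (Fin (k * m + 1)) ℝ,
      (∀ i j, 0 ≤ A i j) ∧
      (∀ i, ∑ j, A i j = ((k * m + 1 : ℕ) : ℝ)) ∧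
      (∀ j, ∑ i, A i j = (m : ℝ)) ∧
      {p : Fin m × Fin (k * m + 1) | A p.1 p.2 ≠ 0}.ncard = (k + 1) * m) ∧
    S m (k * m + 1) = (k + 1) * m := by
  classical
  have hm0 : 0 < m := by omega
  set n := k * m + 1 with hn
  have hn0 : 0 < n := by omega
  -- the construction
  set A : Matrix (Fin m) (Fin n) ℝ := fun i j =>
    max 0 (min (((i.1+1)*n : ℕ) : ℝ) (((j.1+1)*m : ℕ) : ℝ)
      - max ((i.1*n : ℕ) : ℝ) ((j.1*m : ℕ) : ℝ)) with hA
  have hpos : ∀ i j, 0 ≤ A i j := fun i j => le_max_left _ _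
  have hrow : ∀ i, ∑ j, A i j = ((n : ℕ) : ℝ) := by
    intro i
    have hclamp := sum_clamp ((i.1*n : ℕ) : ℝ) (((i.1+1)*n : ℕ) : ℝ) n
      (fun t => ((t*m : ℕ) : ℝ))
      (fun t => by
        show ((t*m : ℕ) : ℝ) ≤ (((t+1)*m : ℕ) : ℝ)
        exact_mod_cast Nat.mul_le_mul (Nat.le_succ t) le_rfl)
      (by exact_mod_cast Nat.mul_le_mul (Nat.le_succ i.1) (le_refl n))
      (by
        show ((0*m : ℕ) : ℝ) ≤ ((i.1*n : ℕ) : ℝ)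
        simp only [Nat.zero_mul, Nat.cast_zero]
        exact Nat.cast_nonneg _)
      (by
        show (((i.1+1)*n : ℕ) : ℝ) ≤ ((n*m : ℕ) : ℝ)
        exact_mod_cast (Nat.mul_le_mul i.isLt (le_refl n)).trans (le_of_eq (mul_comm m n)))
    have hfin : (∑ j, A i j) = ∑ t ∈ Finset.range n,
        max 0 (min (((i.1+1)*n : ℕ) : ℝ) (((t+1)*m : ℕ) : ℝ)
          - max ((i.1*n : ℕ) : ℝ) ((t*m : ℕ) : ℝ)) :=
      Fin.sum_univ_eq_sum_range (fun t =>
        max 0 (min (((i.1+1)*n : ℕ) : ℝ) (((t+1)*m : ℕ) : ℝ)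
          - max ((i.1*n : ℕ) : ℝ) ((t*m : ℕ) : ℝ))) n
    rw [hfin, hclamp]
    push_cast
    ring
  have hcol : ∀ j, ∑ i, A i j = ((m : ℕ) : ℝ) := by
    intro j
    have hcomm : ∀ i : Fin m, A i j =
        max 0 (min (((j.1+1)*m : ℕ) : ℝ) (((i.1+1)*n : ℕ) : ℝ)
          - max ((j.1*m : ℕ) : ℝ) ((i.1*n : ℕ) : ℝ)) := by
      intro i
      rw [hA]
      simp only [min_comm, max_comm]
    have hclamp := sum_clamp ((j.1*m : ℕ) : ℝ) (((j.1+1)*m : ℕ) : ℝ) m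
      (fun t => ((t*n : ℕ) : ℝ))
      (fun t => by
        show ((t*n : ℕ) : ℝ) ≤ (((t+1)*n : ℕ) : ℝ)
        exact_mod_cast Nat.mul_le_mul (Nat.le_succ t) le_rfl)
      (by exact_mod_cast Nat.mul_le_mul (Nat.le_succ j.1) (le_refl m))
      (by
        show ((0*n : ℕ) : ℝ) ≤ ((j.1*m : ℕ) : ℝ)
        simp only [Nat.zero_mul, Nat.cast_zero]
        exact Nat.cast_nonneg _)
      (by
        show (((j.1+1)*m : ℕ) : ℝ) ≤ ((m*n : ℕ) : ℝ)
        exact_mod_cast (Nat.mul_le_mul j.isLt (le_refl m)).trans (le_of_eq (mul_comm n m)))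
    simp_rw [hcomm]
    have hfin : (∑ i : Fin m, max 0 (min (((j.1+1)*m : ℕ) : ℝ) (((i.1+1)*n : ℕ) : ℝ)
          - max ((j.1*m : ℕ) : ℝ) ((i.1*n : ℕ) : ℝ))) = ∑ t ∈ Finset.range m,
        max 0 (min (((j.1+1)*m : ℕ) : ℝ) (((t+1)*n : ℕ) : ℝ)
          - max ((j.1*m : ℕ) : ℝ) ((t*n : ℕ) : ℝ)) :=
      Fin.sum_univ_eq_sum_range (fun t =>
        max 0 (min (((j.1+1)*m : ℕ) : ℝ) (((t+1)*n : ℕ) : ℝ)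
          - max ((j.1*m : ℕ) : ℝ) ((t*n : ℕ) : ℝ))) m
    rw [hfin, hclamp]
    push_cast
    ring
  -- characterization of the support
  have hsupp : ∀ (i : Fin m) (j : Fin n),
      A i j ≠ 0 ↔ (i.1*n < (j.1+1)*m ∧ j.1*m < (i.1+1)*n) := by
    intro i j
    have h1 : A i j ≠ 0 ↔ 0 < A i j := by
      constructor
      · intro h; exact lt_of_le_of_ne (hpos i j) (Ne.symm h)
      · intro h; exact ne_of_gt h
    rw [h1, hA]
    simp only
    rw [lt_max_iff]
    have hab : ((i.1*n : ℕ) : ℝ) < (((i.1+1)*n : ℕ) : ℝ) := by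
      exact_mod_cast (Nat.mul_lt_mul_right hn0).mpr (Nat.lt_succ_self i.1)
    have hxy : ((j.1*m : ℕ) : ℝ) < (((j.1+1)*m : ℕ) : ℝ) := by
      exact_mod_cast (Nat.mul_lt_mul_right hm0).mpr (Nat.lt_succ_self j.1)
    constructor
    · rintro (h | h)
      · exact absurd h (lt_irrefl 0)
      · rw [sub_pos, max_lt_iff, lt_min_iff, lt_min_iff] at h
        exact ⟨by exact_mod_cast h.1.2, by exact_mod_cast h.2.1⟩
    · rintro ⟨h1', h2'⟩
      right
      rw [sub_pos, max_lt_iff, lt_min_iff, lt_min_iff]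
      exact ⟨⟨hab, by exact_mod_cast h1'⟩, ⟨by exact_mod_cast h2', hxy⟩⟩
  -- counting the support
  have hcount : {p : Fin m × Fin n | A p.1 p.2 ≠ 0}.ncard = (k + 1) * m := by
    have hset : {p : Fin m × Fin n | A p.1 p.2 ≠ 0}
        = {p : Fin m × Fin n | p.1.1*n < (p.2.1+1)*m ∧ p.2.1*m < (p.1.1+1)*n} := by
      ext p
      exact hsupp p.1 p.2
    rw [hset, Set.ncard_eq_toFinset_card', Set.toFinset_setOf]
    rw [card_filter_prod (fun i j => i.1*n < (j.1+1)*m ∧ j.1*m < (i.1+1)*n)]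
    have hrowc : ∀ i : Fin m,
        (Finset.univ.filter fun j : Fin n => i.1*n < (j.1+1)*m ∧ j.1*m < (i.1+1)*n).card
          = min ((i.1+1)*n/m + 1) n - i.1*n/m := by
      intro i
      rw [fin_filter_card (fun t => i.1*n < (t+1)*m ∧ t*m < (i.1+1)*n)]
      rw [show ((Finset.range n).filter fun t => i.1*n < (t+1)*m ∧ t*m < (i.1+1)*n)
          = Finset.Ico (i.1*n/m) (min ((i.1+1)*n/m + 1) n) from
        row_filter_eq m k i.1 hm0 i.isLt]
      rw [Nat.card_Ico]
    simp_rw [hrowc]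
    rw [show (∑ i : Fin m, (min ((i.1+1)*n/m + 1) n - i.1*n/m))
        = ∑ t ∈ Finset.range m, (min ((t+1)*n/m + 1) n - t*n/m) from
      Fin.sum_univ_eq_sum_range (fun t => min ((t+1)*n/m + 1) n - t*n/m) m]
    rw [telescope_sum m k hm]
    ring
  refine ⟨⟨A, hpos, hrow, hcol, hcount⟩, ?_⟩
  -- lower bound and value of S
  have hmem : (k+1)*m ∈ {s : ℕ | ∃ B : Matrix (Fin m) (Fin n) ℝ,
      (∀ i j, 0 ≤ B i j) ∧ (∀ i, ∑ j, B i j = (n : ℝ)) ∧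
      (∀ j, ∑ i, B i j = (m : ℝ)) ∧
      s = {p : Fin m × Fin n | B p.1 p.2 ≠ 0}.ncard} :=
    ⟨A, hpos, hrow, hcol, hcount.symm⟩
  have hlb : ∀ s ∈ {s : ℕ | ∃ B : Matrix (Fin m) (Fin n) ℝ,
      (∀ i j, 0 ≤ B i j) ∧ (∀ i, ∑ j, B i j = (n : ℝ)) ∧
      (∀ j, ∑ i, B i j = (m : ℝ)) ∧
      s = {p : Fin m × Fin n | B p.1 p.2 ≠ 0}.ncard}, (k+1)*m ≤ s := by
    rintro s ⟨B, hBpos, hBrow, hBcol, hBs⟩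
    have hcard' : s = ∑ i, (Finset.univ.filter fun j : Fin n => B i j ≠ 0).card := by
      rw [hBs, Set.ncard_eq_toFinset_card', Set.toFinset_setOf,
        card_filter_prod (fun i j => B i j ≠ 0)]
    have hper : ∀ i : Fin m,
        k + 1 ≤ (Finset.univ.filter fun j : Fin n => B i j ≠ 0).card := by
      intro i
      set c := (Finset.univ.filter fun j : Fin n => B i j ≠ 0).card with hc
      have hBle : ∀ j, B i j ≤ (m : ℝ) := by
        intro j
        calc B i j ≤ ∑ i', B i' j :=
              Finset.single_le_sum (fun i' _ => hBpos i' j) (Finset.mem_univ i)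
          _ = (m : ℝ) := hBcol j
      have hsum : ((n : ℕ) : ℝ) = ∑ j ∈ Finset.univ.filter (fun j : Fin n => B i j ≠ 0),
          B i j := by
        rw [Finset.sum_filter_ne_zero, hBrow i]
      have hle2 : ((n : ℕ) : ℝ) ≤ (c : ℝ) * m := by
        rw [hsum]
        calc ∑ j ∈ Finset.univ.filter (fun j : Fin n => B i j ≠ 0), B i j
            ≤ c • (m : ℝ) := Finset.sum_le_card_nsmul _ _ _ (fun j _ => hBle j)
          _ = (c : ℝ) * m := by rw [nsmul_eq_mul]
      have hle3 : n ≤ c * m := by exact_mod_cast hle2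
      by_contra hcon
      push_neg at hcon
      have : c * m ≤ k * m := Nat.mul_le_mul (by omega) le_rfl
      omega
    rw [hcard']
    calc (k+1)*m = ∑ _i : Fin m, (k+1) := by
          rw [Finset.sum_const, Finset.card_univ, Fintype.card_fin, smul_eq_mul]; ring
      _ ≤ ∑ i, (Finset.univ.filter fun j : Fin n => B i j ≠ 0).card :=
          Finset.sum_le_sum (fun i _ => hper i)
  unfold S
  exact le_antisymm (Nat.sInf_le hmem) (le_csInf ⟨_, hmem⟩ hlb)
end

section
/- For every m ≥ 2, k ≥ 1, there exists a measurable function F: ℝ → ℝ≥0 with ∑_{g∈mℤ} F(x−g) = km+1 and ∑_{g∈(km+1)ℤ} F(x−g) = m for every x ∈ ℝ, such that the Lebesgue measure of supp F equals (k+1)m, which is strictly less than m + (km+1) = (k+1)m + 1 (the support length of the convolution tile 𝟙_{[0,m]}*𝟙_{[0,km+1]}). -/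
open MeasureTheory Finset

namespace EffTile

lemma hasSum_shift (d : ℤ) (hd : d ≠ 0) (n p : ℤ) (v : ℝ) :
    HasSum (fun g : ℤ => if n - d * g = p then v else 0) (if d ∣ (n - p) then v else 0) := by
  by_cases h : d ∣ n - p
  · obtain ⟨g0, hg0⟩ := h
    have he : (fun g : ℤ => if n - d * g = p then v else 0)
        = fun g => if g = g0 then v else 0 := by
      funext g
      by_cases hg : g = g0
      · subst hg
        have hnp : n - d * g = p := by omega
        simp [hnp]
      · have hne : n - d * g ≠ p := by
          intro he2
          exact hg (mul_left_cancel₀ hd (by omega))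
        simp [hne, hg]
    rw [he, if_pos ⟨g0, hg0⟩]
    exact hasSum_ite_eq g0 v
  · rw [if_neg h]
    have he : (fun g : ℤ => if n - d * g = p then v else 0) = fun _ => (0:ℝ) := by
      funext g
      have : n - d * g ≠ p := fun he2 => h ⟨g, by omega⟩
      simp [this]
    rw [he]
    exact hasSum_zero

-- exactly one residue in range m


lemma one_residue (m : ℕ) (hm : 0 < m) (n : ℤ) (v : ℝ) :
    ∑ i ∈ range m, (if (m:ℤ) ∣ (n - i) then v else 0) = v := by
  have hm' : (0:ℤ) < m := by exact_mod_cast hm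
  set i0 : ℕ := (n % m).toNat with hi0
  have h0 : ((i0 : ℤ)) = n % m := Int.toNat_of_nonneg (Int.emod_nonneg n (by omega))
  have hlt : i0 < m := by
    have := Int.emod_lt_of_pos n hm'
    omega
  have hcong : ∀ i ∈ range m, (if (m:ℤ) ∣ (n - i) then v else 0) = (if i = i0 then v else 0) := by
    intro i hi
    have hi' : (i:ℤ) < m := by exact_mod_cast mem_range.mp hi
    congr 1
    rw [eq_iff_iff]
    constructor
    · intro hdvd
      have : (i:ℤ) % m = n % m := by
        obtain ⟨t, ht⟩ := hdvd
        have : (i:ℤ) = n - m * t := by omega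
        rw [this]
        simp [Int.sub_emod, Int.mul_emod_left]
      have : (i:ℤ) = n % m := by
        rwa [Int.emod_eq_of_lt (by positivity) hi'] at this
      exact_mod_cast (by omega : (i:ℤ) = (i0:ℤ))
    · rintro rfl
      rw [h0]
      exact ⟨n / m, by rw [Int.emod_def]; ring⟩
  rw [Finset.sum_congr rfl hcong, Finset.sum_ite_eq' (range m) i0 (fun _ => v),
    if_pos (mem_range.mpr hlt)]


lemma const_sum (k : ℕ) (P : Prop) [Decidable P] (v : ℝ) :
    ∑ _ ∈ range k, (if P then v else 0) = if P then (k:ℝ)*v else 0 := by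
  by_cases h : P <;> simp [h, mul_comm]


lemma single_sum_eval (m : ℕ) (N : ℤ) (hN : 0 < N) (n : ℤ) (v : ℝ) :
    (∑ i ∈ range m, if n = (i:ℤ)*N then v else 0)
      = if N ∣ n ∧ 0 ≤ n ∧ n < (m:ℤ)*N then v else 0 := by
  by_cases h : N ∣ n ∧ 0 ≤ n ∧ n < (m:ℤ)*N
  · obtain ⟨⟨t, ht⟩, h0, h1⟩ := h
    have ht0 : 0 ≤ t := by nlinarith
    have htm : t < m := by
      by_contra hc
      push_neg at hc
      have : (m:ℤ)*N ≤ t*N := mul_le_mul_of_nonneg_right hc (le_of_lt hN)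
      nlinarith
    set i0 : ℕ := t.toNat with hi0
    have hti : (i0:ℤ) = t := Int.toNat_of_nonneg ht0
    have hi0m : i0 < m := by omega
    have hcong : ∀ i ∈ range m, (if n = (i:ℤ)*N then v else 0) = (if i = i0 then v else 0) := by
      intro i hi
      by_cases he : i = i0
      · subst he
        simp [show n = (i0:ℤ)*N by rw [hti, mul_comm t N]; exact ht]
      · have hne : n ≠ (i:ℤ)*N := by
          intro hcc
          apply he
          have : (i:ℤ)*N = t*N := by rw [← hcc, ht, mul_comm]
          have : (i:ℤ) = t := by
            exact mul_right_cancel₀ (by omega) this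
          omega
        simp [hne, he]
    rw [Finset.sum_congr rfl hcong, Finset.sum_ite_eq' (range m) i0 (fun _ => v),
      if_pos (mem_range.mpr hi0m)]
    rw [if_pos ⟨⟨t, ht⟩, h0, h1⟩]
  · rw [if_neg h]
    apply Finset.sum_eq_zero
    intro i hi
    have him : (i:ℤ) < m := by exact_mod_cast mem_range.mp hi
    have hne : n ≠ (i:ℤ)*N := by
      intro hcc
      apply h
      refine ⟨⟨i, by rw [hcc, mul_comm]⟩, by rw [hcc]; positivity, ?_⟩
      rw [hcc]
      exact mul_lt_mul_of_pos_right him hN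
    simp [hne]


lemma double_sum_eval (m k : ℕ) (hm : 0 < m) (n : ℤ) (v : ℝ) :
    ∑ a ∈ range m, ∑ b ∈ range k, (if n = 1 + (a:ℤ) + (b:ℤ)*(m:ℤ) then v else 0)
      = if 1 ≤ n ∧ n ≤ (k:ℤ)*m then v else 0 := by
  have hm' : (0:ℤ) < m := by exact_mod_cast hm
  by_cases hn : 1 ≤ n ∧ n ≤ (k:ℤ)*m
  · obtain ⟨hn1, hn2⟩ := hn
    rw [if_pos ⟨hn1, hn2⟩]
    set a0 : ℕ := ((n-1) % m).toNat with ha0def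
    set b0 : ℕ := ((n-1) / m).toNat with hb0def
    have ha0 : ((a0:ℤ)) = (n-1) % m := Int.toNat_of_nonneg (Int.emod_nonneg _ (by omega))
    have hb0 : ((b0:ℤ)) = (n-1) / m := Int.toNat_of_nonneg (Int.ediv_nonneg (by omega) (by omega))
    have ha0m : a0 < m := by
      have := Int.emod_lt_of_pos (n-1) hm'
      omega
    have hb0k : b0 < k := by
      have h1 : (n-1)/m < k := by
        rw [Int.ediv_lt_iff_lt_mul hm']
        omega
      omega
    have hsum : (a0:ℤ) + (b0:ℤ)*m = n - 1 := by
      rw [ha0, hb0, mul_comm ((n-1)/m) (m:ℤ)]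
      exact Int.emod_add_mul_ediv (n-1) m
    have fwd : ∀ a ∈ range m, ∀ b ∈ range k, n = 1 + (a:ℤ) + (b:ℤ)*m → a = a0 ∧ b = b0 := by
      intro a ha b hb h
      have ham : (a:ℤ) < m := by exact_mod_cast mem_range.mp ha
      have e0 : n - 1 = (a:ℤ) + (b:ℤ)*m := by omega
      have e1 : (n - 1) % m = a := by
        rw [e0, Int.add_mul_emod_self_right]
        exact Int.emod_eq_of_lt (by positivity) ham
      have e2 : (n - 1) / m = b := by
        rw [e0, Int.add_mul_ediv_right _ _ (by omega : (m:ℤ) ≠ 0),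
          Int.ediv_eq_zero_of_lt (by positivity) ham]
        ring
      constructor
      · have : (a:ℤ) = a0 := by omega
        exact_mod_cast this
      · have : (b:ℤ) = b0 := by omega
        exact_mod_cast this
    have hcong : ∀ a ∈ range m, ∀ b ∈ range k,
        (if n = 1 + (a:ℤ) + (b:ℤ)*(m:ℤ) then v else 0)
          = (if b = b0 then (if a = a0 then v else 0) else 0) := by
      intro a ha b hb
      by_cases h1 : a = a0 <;> by_cases h2 : b = b0
      · subst h1; subst h2
        simp [show n = 1 + (a0:ℤ) + (b0:ℤ)*m by omega]
      all_goals {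
        have hne : n ≠ 1 + (a:ℤ) + (b:ℤ)*m := by
          intro h
          rcases fwd a ha b hb h with ⟨e1, e2⟩
          tauto
        rw [if_neg hne]
        simp [h1, h2] }
    rw [Finset.sum_congr rfl (fun a ha => Finset.sum_congr rfl (fun b hb => hcong a ha b hb))]
    have hin : ∀ a ∈ range m,
        (∑ b ∈ range k, if b = b0 then (if a = a0 then v else 0) else 0)
          = (if a = a0 then v else 0) := by
      intro a _
      rw [Finset.sum_ite_eq' (range k) b0, if_pos (mem_range.mpr hb0k)]
    rw [Finset.sum_congr rfl hin, Finset.sum_ite_eq' (range m) a0, if_pos (mem_range.mpr ha0m)]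
  · rw [if_neg hn]
    apply Finset.sum_eq_zero
    intro a ha
    apply Finset.sum_eq_zero
    intro b hb
    have ham : (a:ℤ) < m := by exact_mod_cast mem_range.mp ha
    have hbk : (b:ℤ) < k := by exact_mod_cast mem_range.mp hb
    have hne : n ≠ 1 + (a:ℤ) + (b:ℤ)*m := by
      intro h
      apply hn
      have h1 : (b:ℤ)*m ≤ ((k:ℤ)-1)*m := by
        apply mul_le_mul_of_nonneg_right _ (by omega)
        omega
      constructor
      · have : (0:ℤ) ≤ a := by positivity
        have : (0:ℤ) ≤ (b:ℤ)*m := by positivity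
        omega
      · have h2 : ((k:ℤ)-1)*m = (k:ℤ)*m - m := by ring
        omega
    simp [hne]


lemma double_sum_dvd (m k : ℕ) (hm : 0 < m) (n : ℤ) (v : ℝ) :
    ∑ a ∈ range m, ∑ b ∈ range k,
      (if ((k:ℤ)*(m:ℤ)+1) ∣ (n - (1 + (a:ℤ) + (b:ℤ)*(m:ℤ))) then v else 0)
      = if ((k:ℤ)*(m:ℤ)+1) ∣ n then 0 else v := by
  have hm' : (0:ℤ) < m := by exact_mod_cast hm
  set N : ℤ := (k:ℤ)*(m:ℤ)+1 with hNdef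
  have hkm0 : (0:ℤ) ≤ (k:ℤ)*m := by positivity
  have hN : 0 < N := by omega
  have hpbound : ∀ a ∈ range m, ∀ b ∈ range k,
      1 ≤ 1 + (a:ℤ) + (b:ℤ)*(m:ℤ) ∧ 1 + (a:ℤ) + (b:ℤ)*(m:ℤ) ≤ (k:ℤ)*m := by
    intro a ha b hb
    have ham : (a:ℤ) < m := by exact_mod_cast mem_range.mp ha
    have hbk : (b:ℤ) < k := by exact_mod_cast mem_range.mp hb
    have h1 : (b:ℤ)*m ≤ ((k:ℤ)-1)*m := by
      apply mul_le_mul_of_nonneg_right _ (by omega)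
      omega
    have h2 : ((k:ℤ)-1)*m = (k:ℤ)*m - m := by ring
    have ha0 : (0:ℤ) ≤ a := by positivity
    have hb0 : (0:ℤ) ≤ (b:ℤ)*m := by positivity
    omega
  by_cases hd : N ∣ n
  · rw [if_pos hd]
    apply Finset.sum_eq_zero; intro a ha
    apply Finset.sum_eq_zero; intro b hb
    obtain ⟨hp1, hp2⟩ := hpbound a ha b hb
    have hnd : ¬ N ∣ n - (1 + (a:ℤ) + (b:ℤ)*(m:ℤ)) := by
      intro hdp
      have h3 : N ∣ (1 + (a:ℤ) + (b:ℤ)*(m:ℤ)) := by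
        have := dvd_sub hd hdp
        have he : n - (n - (1 + (a:ℤ) + (b:ℤ)*(m:ℤ))) = 1 + (a:ℤ) + (b:ℤ)*(m:ℤ) := by ring
        rwa [he] at this
      have := Int.le_of_dvd (by omega) h3
      omega
    simp [hnd]
  · rw [if_neg hd]
    set r : ℤ := n % N with hrdef
    have hr0 : 0 ≤ r := Int.emod_nonneg n (by omega)
    have hrN : r < N := Int.emod_lt_of_pos n hN
    have hr1 : 1 ≤ r := by
      rcases eq_or_lt_of_le hr0 with h|h
      · exfalso; exact hd ((Int.dvd_iff_emod_eq_zero.mpr h.symm))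
      · omega
    have hrkm : r ≤ (k:ℤ)*m := by omega
    have hnr : N ∣ n - r := ⟨n / N, by rw [hrdef, Int.emod_def]; ring⟩
    have hcong : ∀ a ∈ range m, ∀ b ∈ range k,
        (if N ∣ (n - (1 + (a:ℤ) + (b:ℤ)*(m:ℤ))) then v else 0)
        = (if r = 1 + (a:ℤ) + (b:ℤ)*(m:ℤ) then v else 0) := by
      intro a ha b hb
      obtain ⟨hp1, hp2⟩ := hpbound a ha b hb
      congr 1
      rw [eq_iff_iff]
      constructor
      · intro hdp
        have h2 : N ∣ (r - (1 + (a:ℤ) + (b:ℤ)*(m:ℤ))) := by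
          have h3 := dvd_sub hnr hdp
          have he : (n - r) - (n - (1 + (a:ℤ) + (b:ℤ)*(m:ℤ)))
              = -(r - (1 + (a:ℤ) + (b:ℤ)*(m:ℤ))) := by ring
          rw [he] at h3
          exact (dvd_neg).mp h3
        have h4 := Int.eq_zero_of_abs_lt_dvd h2 (by rw [abs_lt]; omega)
        omega
      · intro he
        rw [show n - (1 + (a:ℤ) + (b:ℤ)*(m:ℤ)) = n - r by omega]
        exact hnr
    rw [Finset.sum_congr rfl (fun a ha => Finset.sum_congr rfl (fun b hb => hcong a ha b hb)),
      double_sum_eval m k hm r v, if_pos ⟨hr1, hrkm⟩]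

noncomputable def tileFun (m k : ℕ) (n : ℤ) : ℝ :=
  (∑ a ∈ range m, ∑ b ∈ range k, if n = 1 + (a:ℤ) + (b:ℤ)*(m:ℤ) then (m:ℝ) else 0)
  + ∑ i ∈ range m, if n = (i:ℤ) * ((k:ℤ)*(m:ℤ)+1) then 1 else 0

end EffTile

open EffTile

/-- For `m ≥ 2`, `k ≥ 1` there is a nonnegative measurable `F : ℝ → ℝ` tiling
with `mℤ` at level `km+1` and with `(km+1)ℤ` at level `m`, whose support has
Lebesgue measure `(k+1)m < m + (km+1)`, the support length of the convolution
tile. -/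
theorem efficient_common_tile_on_R (m k : ℕ) (hm : 2 ≤ m) (hk : 1 ≤ k) :
    (∃ F : ℝ → ℝ, Measurable F ∧ (∀ x, 0 ≤ F x) ∧
      (∀ x : ℝ, ∑' g : ℤ, F (x - (m : ℝ) * g) = (k * m + 1 : ℕ)) ∧
      (∀ x : ℝ, ∑' g : ℤ, F (x - ((k * m + 1 : ℕ) : ℝ) * g) = m) ∧
      volume (Function.support F) = (((k + 1) * m : ℕ) : ENNReal)) ∧
    (k + 1) * m < m + (k * m + 1) := by
  have hm0 : 0 < m := by omega
  have hmz : (m:ℤ) ≠ 0 := by omega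
  set Nz : ℤ := (k:ℤ)*(m:ℤ)+1 with hNzdef
  have hkm0 : (0:ℤ) ≤ (k:ℤ)*m := by positivity
  have hmkm : (m:ℤ) ≤ (k:ℤ)*m := by
    have : (1:ℤ)*(m:ℤ) ≤ (k:ℤ)*m :=
      mul_le_mul_of_nonneg_right (by exact_mod_cast hk) (by positivity)
    omega
  have hNzpos : (0:ℤ) < Nz := by omega
  have hNznz : Nz ≠ 0 := by omega
  constructor
  · refine ⟨fun x => tileFun m k ⌊x⌋, ?_, ?_, ?_, ?_, ?_⟩
    · have h1 : Measurable (tileFun m k) := measurable_from_top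
      exact h1.comp Int.measurable_floor
    · intro x
      unfold tileFun
      apply add_nonneg
      · apply Finset.sum_nonneg; intro a _; apply Finset.sum_nonneg; intro b _
        split_ifs <;> positivity
      · apply Finset.sum_nonneg; intro i _
        split_ifs <;> norm_num
    · -- tiling with mℤ at level km+1
      intro x
      set n : ℤ := ⌊x⌋ with hn
      have hfe : ∀ g : ℤ, tileFun m k ⌊x - (m:ℝ)*g⌋ = tileFun m k (n - (m:ℤ)*g) := by
        intro g
        have h1 : x - (m:ℝ)*g = x - (((m:ℤ)*g : ℤ):ℝ) := by push_cast; ring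
        rw [h1, Int.floor_sub_intCast]
      rw [tsum_congr hfe]
      have hA : HasSum
          (fun g : ℤ => ∑ a ∈ range m, ∑ b ∈ range k,
            if n - (m:ℤ)*g = 1 + (a:ℤ) + (b:ℤ)*(m:ℤ) then (m:ℝ) else 0)
          (∑ a ∈ range m, ∑ b ∈ range k,
            if (m:ℤ) ∣ (n - (1 + (a:ℤ) + (b:ℤ)*(m:ℤ))) then (m:ℝ) else 0) :=
        hasSum_sum (fun a _ => hasSum_sum (fun b _ => hasSum_shift (m:ℤ) hmz n _ _))
      have hB : HasSum
          (fun g : ℤ => ∑ i ∈ range m,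
            if n - (m:ℤ)*g = (i:ℤ)*Nz then (1:ℝ) else 0)
          (∑ i ∈ range m, if (m:ℤ) ∣ (n - (i:ℤ)*Nz) then (1:ℝ) else 0) :=
        hasSum_sum (fun i _ => hasSum_shift (m:ℤ) hmz n _ _)
      have htot := (hA.add hB).tsum_eq
      simp only [tileFun]
      rw [htot]
      -- evaluate the two sums
      have e1 : ∀ a ∈ range m,
          (∑ b ∈ range k, if (m:ℤ) ∣ (n - (1 + (a:ℤ) + (b:ℤ)*(m:ℤ))) then (m:ℝ) else 0)
            = (if (m:ℤ) ∣ ((n-1) - (a:ℤ)) then (k:ℝ)*(m:ℝ) else 0) := by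
        intro a _
        have hcg : ∀ b ∈ range k,
            (if (m:ℤ) ∣ (n - (1 + (a:ℤ) + (b:ℤ)*(m:ℤ))) then (m:ℝ) else 0)
              = (if (m:ℤ) ∣ ((n-1) - (a:ℤ)) then (m:ℝ) else 0) := by
          intro b _
          congr 1
          rw [eq_iff_iff]
          constructor
          · intro h
            have he : (n-1)-(a:ℤ) = (n - (1 + (a:ℤ) + (b:ℤ)*(m:ℤ))) + (b:ℤ)*(m:ℤ) := by ring
            rw [he]
            exact dvd_add h ⟨b, mul_comm _ _⟩
          · intro h
            have he : n - (1 + (a:ℤ) + (b:ℤ)*(m:ℤ)) = ((n-1)-(a:ℤ)) - (b:ℤ)*(m:ℤ) := by ring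
            rw [he]
            exact dvd_sub h ⟨b, mul_comm _ _⟩
        rw [Finset.sum_congr rfl hcg, const_sum]
      have e2 : ∀ i ∈ range m,
          (if (m:ℤ) ∣ (n - (i:ℤ)*Nz) then (1:ℝ) else 0)
            = (if (m:ℤ) ∣ (n - (i:ℤ)) then (1:ℝ) else 0) := by
        intro i _
        congr 1
        rw [eq_iff_iff]
        constructor
        · intro h
          have he : n - (i:ℤ) = (n - (i:ℤ)*Nz) + ((i:ℤ)*(k:ℤ))*(m:ℤ) := by rw [hNzdef]; ring
          rw [he]
          exact dvd_add h ⟨(i:ℤ)*(k:ℤ), mul_comm _ _⟩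
        · intro h
          have he : n - (i:ℤ)*Nz = (n - (i:ℤ)) - ((i:ℤ)*(k:ℤ))*(m:ℤ) := by rw [hNzdef]; ring
          rw [he]
          exact dvd_sub h ⟨(i:ℤ)*(k:ℤ), mul_comm _ _⟩
      rw [Finset.sum_congr rfl e1, one_residue m hm0 (n-1) ((k:ℝ)*(m:ℝ)),
        Finset.sum_congr rfl e2, one_residue m hm0 n (1:ℝ)]
      push_cast
      ring
    · -- tiling with (km+1)ℤ at level m
      intro x
      set n : ℤ := ⌊x⌋ with hn
      have hcast : ((k*m+1 : ℕ) : ℝ) = ((Nz : ℤ) : ℝ) := by rw [hNzdef]; push_cast; ring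
      have hfe : ∀ g : ℤ, tileFun m k ⌊x - ((k*m+1 : ℕ):ℝ)*g⌋ = tileFun m k (n - Nz*g) := by
        intro g
        have h1 : x - ((k*m+1 : ℕ):ℝ)*g = x - ((Nz*g : ℤ):ℝ) := by
          rw [hNzdef]; push_cast; ring
        rw [h1, Int.floor_sub_intCast]
      rw [tsum_congr hfe]
      have hA : HasSum
          (fun g : ℤ => ∑ a ∈ range m, ∑ b ∈ range k,
            if n - Nz*g = 1 + (a:ℤ) + (b:ℤ)*(m:ℤ) then (m:ℝ) else 0)
          (∑ a ∈ range m, ∑ b ∈ range k,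
            if Nz ∣ (n - (1 + (a:ℤ) + (b:ℤ)*(m:ℤ))) then (m:ℝ) else 0) :=
        hasSum_sum (fun a _ => hasSum_sum (fun b _ => hasSum_shift Nz hNznz n _ _))
      have hB : HasSum
          (fun g : ℤ => ∑ i ∈ range m,
            if n - Nz*g = (i:ℤ)*Nz then (1:ℝ) else 0)
          (∑ i ∈ range m, if Nz ∣ (n - (i:ℤ)*Nz) then (1:ℝ) else 0) :=
        hasSum_sum (fun i _ => hasSum_shift Nz hNznz n _ _)
      have htot := (hA.add hB).tsum_eq
      simp only [tileFun]
      rw [htot]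
      have e1 := double_sum_dvd m k hm0 n (m:ℝ)
      have e2 : ∀ i ∈ range m,
          (if Nz ∣ (n - (i:ℤ)*Nz) then (1:ℝ) else 0) = (if Nz ∣ n then (1:ℝ) else 0) := by
        intro i _
        congr 1
        rw [eq_iff_iff]
        constructor
        · intro h
          have he : n = (n - (i:ℤ)*Nz) + (i:ℤ)*Nz := by ring
          rw [he]
          exact dvd_add h ⟨i, mul_comm _ _⟩
        · intro h
          exact dvd_sub h ⟨i, mul_comm _ _⟩
      rw [e1, Finset.sum_congr rfl e2, const_sum]
      by_cases hd : Nz ∣ n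
      · rw [if_pos hd, if_pos hd]
        norm_num
      · rw [if_neg hd, if_neg hd]
        norm_num
    · -- support
      set S : Finset ℤ := Finset.Icc 1 ((k:ℤ)*(m:ℤ)) ∪ (range m).image (fun i : ℕ => (i:ℤ)*Nz)
        with hSdef
      have hcne : ∀ n : ℤ, tileFun m k n ≠ 0 ↔ n ∈ S := by
        intro n
        unfold tileFun
        rw [double_sum_eval m k hm0 n (m:ℝ), single_sum_eval m Nz hNzpos n (1:ℝ)]
        constructor
        · intro hne
          by_cases hI : 1 ≤ n ∧ n ≤ (k:ℤ)*m
          · exact Finset.mem_union_left _ (Finset.mem_Icc.mpr hI)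
          · by_cases hJ : Nz ∣ n ∧ 0 ≤ n ∧ n < (m:ℤ)*Nz
            · obtain ⟨⟨t, ht⟩, h0, hlt⟩ := hJ
              have ht0 : 0 ≤ t := by nlinarith
              have htm : t < m := by
                by_contra hc
                push_neg at hc
                have : (m:ℤ)*Nz ≤ t*Nz := mul_le_mul_of_nonneg_right hc (le_of_lt hNzpos)
                nlinarith
              apply Finset.mem_union_right
              refine Finset.mem_image.mpr ⟨t.toNat, Finset.mem_range.mpr (by omega), ?_⟩
              rw [Int.toNat_of_nonneg ht0, mul_comm]
              exact ht.symm
            · exact absurd (by rw [if_neg hI, if_neg hJ]; ring) hne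
        · intro hmem
          rcases Finset.mem_union.mp hmem with h | h
          · have hI := Finset.mem_Icc.mp h
            rw [if_pos hI]
            have hJ : ¬(Nz ∣ n ∧ 0 ≤ n ∧ n < (m:ℤ)*Nz) := by
              rintro ⟨hdvd, -, -⟩
              have := Int.le_of_dvd (by omega) hdvd
              omega
            rw [if_neg hJ]
            have : (0:ℝ) < m := by positivity
            intro hc
            rw [add_zero] at hc
            exact absurd hc (by positivity)
          · obtain ⟨i, hi, rfl⟩ := Finset.mem_image.mp h
            have him : i < m := Finset.mem_range.mp hi
            have himz : (i:ℤ) < m := by exact_mod_cast him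
            have hIf : ¬(1 ≤ (i:ℤ)*Nz ∧ (i:ℤ)*Nz ≤ (k:ℤ)*m) := by
              rintro ⟨hh1, hh2⟩
              have hi1 : 1 ≤ (i:ℤ) := by
                by_contra hc
                push_neg at hc
                have hi0 : (i:ℤ) = 0 := by omega
                rw [hi0, zero_mul] at hh1
                omega
              have : Nz ≤ (i:ℤ)*Nz := le_mul_of_one_le_left (le_of_lt hNzpos) hi1
              omega
            rw [if_neg hIf, if_pos ⟨⟨i, mul_comm _ _⟩, by positivity,
              mul_lt_mul_of_pos_right himz hNzpos⟩]
            norm_num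
      have hsupp : Function.support (fun x : ℝ => tileFun m k ⌊x⌋)
          = ⋃ p ∈ S, Set.Ico (p:ℝ) (p+1) := by
        ext x
        simp only [Function.mem_support, Set.mem_iUnion, Set.mem_Ico, exists_prop]
        constructor
        · intro h
          refine ⟨⌊x⌋, (hcne ⌊x⌋).mp h, Int.floor_le x, ?_⟩
          have := Int.lt_floor_add_one x
          push_cast at this ⊢
          linarith
        · rintro ⟨p, hp, h1, h2⟩
          have hfl : ⌊x⌋ = p := Int.floor_eq_iff.mpr ⟨h1, by linarith⟩
          rw [hfl]
          exact (hcne p).mpr hp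
      rw [hsupp]
      have hdisj : ((S : Finset ℤ) : Set ℤ).PairwiseDisjoint
          (fun p : ℤ => Set.Ico (p:ℝ) (p+1)) := by
        intro p _ q _ hpq
        refine Set.Ico_disjoint_Ico.mpr ?_
        rcases hpq.lt_or_gt with h | h
        · have h1 : (p:ℝ) + 1 ≤ q := by exact_mod_cast (by omega : p + 1 ≤ q)
          calc min ((p:ℝ)+1) ((q:ℝ)+1) ≤ (p:ℝ)+1 := min_le_left _ _
            _ ≤ (q:ℝ) := h1
            _ ≤ max (p:ℝ) q := le_max_right _ _
        · have h1 : (q:ℝ) + 1 ≤ p := by exact_mod_cast (by omega : q + 1 ≤ p)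
          calc min ((p:ℝ)+1) ((q:ℝ)+1) ≤ (q:ℝ)+1 := min_le_right _ _
            _ ≤ (p:ℝ) := h1
            _ ≤ max (p:ℝ) q := le_max_left _ _
      rw [measure_biUnion_finset hdisj (fun p _ => measurableSet_Ico)]
      have hvol : ∀ p ∈ S, volume (Set.Ico (p:ℝ) (p+1)) = 1 := by
        intro p _
        rw [Real.volume_Ico]
        norm_num
      rw [Finset.sum_congr rfl hvol, Finset.sum_const, nsmul_eq_mul, mul_one]
      have hinj : Function.Injective (fun i : ℕ => (i:ℤ)*Nz) := by
        intro i j hij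
        simp only at hij
        have : (i:ℤ) = j := mul_right_cancel₀ hNznz hij
        exact_mod_cast this
      have hdisjS : Disjoint (Finset.Icc (1:ℤ) ((k:ℤ)*(m:ℤ)))
          ((range m).image (fun i : ℕ => (i:ℤ)*Nz)) := by
        rw [Finset.disjoint_left]
        intro p hp hq
        have hI := Finset.mem_Icc.mp hp
        obtain ⟨i, hi, hpe⟩ := Finset.mem_image.mp hq
        have hi1 : 1 ≤ (i:ℤ) := by
          by_contra hc
          push_neg at hc
          have : (i:ℤ) = 0 := by omega
          rw [← hpe, this] at hI
          simp at hI
        have : Nz ≤ (i:ℤ)*Nz := le_mul_of_one_le_left (le_of_lt hNzpos) hi1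
        omega
      have hcard : S.card = k*m + m := by
        rw [hSdef, Finset.card_union_of_disjoint hdisjS,
          Finset.card_image_of_injective _ hinj, Finset.card_range, Int.card_Icc]
        have : (k:ℤ)*(m:ℤ) + 1 - 1 = ((k*m : ℕ):ℤ) := by push_cast; ring
        rw [this, Int.toNat_natCast]
      rw [hcard]
      have : k*m + m = (k+1)*m := by ring
      rw [this]
  · have : (k+1)*m = k*m + m := by ring
    omega
end
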